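/- arXiv:2404.17131 — 6 statements merged into one kernel-verified Lean document; each statement's English description precedes it below -/
import Mathlib

section
/- Let T₁ ≥ T₂ ≥ ⋯ be a non-increasing sequence of positive contractions on a Hilbert space H. Then the strong operator limit T = lim_n T_n exists, and the projections P_n onto the fixed-point spaces of T_n converge strongly to the projection P onto the fixed-point space of T. -/
open Filter Topology

noncomputable section

local notation "⟪" x ", " y "⟫" => @inner ℂ _ _ x y

variable {H : Type*} [NormedAddCommGroup H] [InnerProductSpace ℂ H] [CompleteSpace H]

namespace Stmt5Aux

open RCLike

lemma symm_clm {S : H →L[ℂ] H} (h : IsSelfAdjoint S) (x y : H) : ⟪S x, y⟫ = ⟪x, S y⟫ :=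
  h.isSymmetric x y

lemma key_sq {S : H →L[ℂ] H} (h0 : 0 ≤ S) (h1 : S ≤ 1) (ξ : H) :
    ‖S ξ‖ ^ 2 ≤ re ⟪S ξ, ξ⟫ := by
  have hsq : S ^ 2 ≤ S := by
    simpa using CStarAlgebra.pow_antitone h0 h1 (one_le_two)
  have hpos := (ContinuousLinearMap.nonneg_iff_isPositive _).mp (sub_nonneg.mpr hsq)
  have h2 := hpos.re_inner_nonneg_left ξ
  have hsa : IsSelfAdjoint S := ((ContinuousLinearMap.nonneg_iff_isPositive _).mp h0).isSelfAdjoint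
  have e1 : ⟪(S ^ 2) ξ, ξ⟫ = ⟪S ξ, S ξ⟫ := by
    rw [pow_two]
    exact symm_clm hsa (S ξ) ξ
  have := inner_self_eq_norm_sq (𝕜 := ℂ) (S ξ)
  rw [ContinuousLinearMap.sub_apply, inner_sub_left, map_sub, sub_nonneg, e1] at h2
  rw [← this]
  exact h2

lemma norm_apply_le {S : H →L[ℂ] H} (h0 : 0 ≤ S) (h1 : S ≤ 1) (ξ : H) :
    ‖S ξ‖ ≤ ‖ξ‖ := by
  have h := key_sq h0 h1 ξ
  have h2 : re ⟪S ξ, ξ⟫ ≤ ‖S ξ‖ * ‖ξ‖ :=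
    (re_le_norm _).trans (norm_inner_le_norm _ _)
  rcases eq_or_lt_of_le (norm_nonneg (S ξ)) with he | hl
  · rw [← he]; exact norm_nonneg ξ
  · nlinarith

set_option linter.unusedSectionVars false in
lemma cauchy_of_sq_diff {u : ℕ → H} {f : ℕ → ℝ} (hf : Antitone f) (hf0 : ∀ n, 0 ≤ f n)
    (hdiff : ∀ n m, n ≤ m → ‖u n - u m‖ ^ 2 ≤ f n - f m) : CauchySeq u := by
  have hbdd : BddBelow (Set.range f) := ⟨0, by rintro x ⟨n, rfl⟩; exact hf0 n⟩
  set L := ⨅ n, f n with hL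
  have hLf : ∀ n, L ≤ f n := fun n => ciInf_le hbdd n
  have htend : Tendsto f atTop (𝓝 L) := tendsto_atTop_ciInf hf hbdd
  have hb0 : Tendsto (fun N => Real.sqrt (f N - L)) atTop (𝓝 0) := by
    have : Tendsto (fun N => f N - L) atTop (𝓝 (L - L)) := htend.sub_const L
    rw [sub_self] at this
    simpa [Function.comp_def] using (Real.continuous_sqrt.continuousAt.tendsto.comp this)
  refine cauchySeq_of_le_tendsto_0 _ (fun n m N hn hm => ?_) hb0
  have key : ∀ n m : ℕ, N ≤ n → n ≤ m → dist (u n) (u m) ≤ Real.sqrt (f N - L) := by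
    intro n m hn hnm
    rw [dist_eq_norm]
    have h1 : ‖u n - u m‖ ^ 2 ≤ f N - L := by
      have := hdiff n m hnm
      have := hf hn
      have := hLf m
      linarith
    calc ‖u n - u m‖ = Real.sqrt (‖u n - u m‖ ^ 2) := (Real.sqrt_sq (norm_nonneg _)).symm
    _ ≤ Real.sqrt (f N - L) := Real.sqrt_le_sqrt h1
  rcases le_total n m with h | h
  · exact key n m hn h
  · rw [dist_comm]; exact key m n hm h

set_option linter.unusedSectionVars false in
lemma eq_of_inner_eq {η ξ : H} (hn : ‖η‖ ≤ ‖ξ‖) (hi : re ⟪η, ξ⟫ = ‖ξ‖ ^ 2) : η = ξ := by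
  have h := norm_sub_sq (𝕜 := ℂ) η ξ
  have h2 : ‖η - ξ‖ ^ 2 ≤ 0 := by
    rw [h, hi]
    nlinarith [pow_le_pow_left₀ (norm_nonneg η) hn 2]
  have : ‖η - ξ‖ = 0 := by nlinarith [norm_nonneg (η - ξ), sq_nonneg ‖η - ξ‖]
  rwa [norm_sub_eq_zero_iff] at this

end Stmt5Aux

open Stmt5Aux RCLike

theorem stmt5 [TopologicalSpace.SeparableSpace H]
    (T : ℕ → H →L[ℂ] H) (hpos : ∀ n, 0 ≤ T n) (hcontr : ∀ n, T n ≤ 1)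
    (hmono : ∀ n, T (n + 1) ≤ T n)
    (P : ℕ → H →L[ℂ] H) (hP : ∀ n, IsIdempotentElem (P n))
    (hPsa : ∀ n, IsSelfAdjoint (P n)) (hPfix : ∀ n, ∀ ξ : H, P n ξ = ξ ↔ T n ξ = ξ) :
    ∃ Tlim : H →L[ℂ] H, (∀ ξ : H, Tendsto (fun n => T n ξ) atTop (nhds (Tlim ξ))) ∧
      ∀ Plim : H →L[ℂ] H, IsIdempotentElem Plim → IsSelfAdjoint Plim →
        (∀ ξ : H, Plim ξ = ξ ↔ Tlim ξ = ξ) →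
        ∀ ξ : H, Tendsto (fun n => P n ξ) atTop (nhds (Plim ξ)) := by
  have hA : Antitone T := antitone_nat_of_succ_le hmono
  have hTpos : ∀ n, (T n).IsPositive := fun n =>
    (ContinuousLinearMap.nonneg_iff_isPositive _).mp (hpos n)
  -- monotonicity of the quadratic forms
  have hinner_mono : ∀ ξ : H, Antitone (fun n => re ⟪T n ξ, ξ⟫) := by
    intro ξ n m hnm
    have h := ((ContinuousLinearMap.nonneg_iff_isPositive _).mp
      (sub_nonneg.mpr (hA hnm))).re_inner_nonneg_left ξ
    simp only [ContinuousLinearMap.sub_apply, inner_sub_left, map_sub, sub_nonneg] at h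
    exact h
  have hinner_nonneg : ∀ (ξ : H) n, 0 ≤ re ⟪T n ξ, ξ⟫ := fun ξ n =>
    (hTpos n).re_inner_nonneg_left ξ
  have hinner_le : ∀ (ξ : H) n, re ⟪T n ξ, ξ⟫ ≤ ‖ξ‖ ^ 2 := by
    intro ξ n
    have h := ((ContinuousLinearMap.nonneg_iff_isPositive _).mp
      (sub_nonneg.mpr (hcontr n))).re_inner_nonneg_left ξ
    simp only [ContinuousLinearMap.sub_apply, ContinuousLinearMap.one_apply, inner_sub_left,
      map_sub, sub_nonneg] at h
    calc re ⟪T n ξ, ξ⟫ ≤ re ⟪ξ, ξ⟫ := h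
    _ = ‖ξ‖ ^ 2 := inner_self_eq_norm_sq ξ
  have hdiff : ∀ (ξ : H) n m, n ≤ m →
      ‖T n ξ - T m ξ‖ ^ 2 ≤ re ⟪T n ξ, ξ⟫ - re ⟪T m ξ, ξ⟫ := by
    intro ξ n m hnm
    have h0 : 0 ≤ T n - T m := sub_nonneg.mpr (hA hnm)
    have h1 : T n - T m ≤ 1 := le_trans (sub_le_self _ (hpos m)) (hcontr n)
    have h := key_sq h0 h1 ξ
    simpa only [ContinuousLinearMap.sub_apply, inner_sub_left, map_sub] using h
  have hcauchy : ∀ ξ : H, CauchySeq (fun n => T n ξ) := by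
    intro ξ
    exact cauchy_of_sq_diff (hinner_mono ξ) (hinner_nonneg ξ) (hdiff ξ)
  choose g hg using fun ξ => cauchySeq_tendsto_of_complete (hcauchy ξ)
  let Tl : H →L[ℂ] H := continuousLinearMapOfTendsto T (tendsto_pi_nhds.mpr hg)
  have hTl : ∀ ξ : H, Tendsto (fun n => T n ξ) atTop (𝓝 (Tl ξ)) := fun ξ => hg ξ
  refine ⟨Tl, hTl, ?_⟩
  -- fixed-point space lemmas
  have hfix_eq : ∀ (n : ℕ) (ξ : H), re ⟪T n ξ, ξ⟫ = ‖ξ‖ ^ 2 → T n ξ = ξ := fun n ξ h =>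
    eq_of_inner_eq (norm_apply_le (hpos n) (hcontr n) ξ) h
  have hfix_mono : ∀ n m, n ≤ m → ∀ ξ : H, T m ξ = ξ → T n ξ = ξ := by
    intro n m hnm ξ hξ
    apply hfix_eq
    refine le_antisymm (hinner_le ξ n) ?_
    have h : re ⟪T m ξ, ξ⟫ ≤ re ⟪T n ξ, ξ⟫ := hinner_mono ξ hnm
    rw [hξ, inner_self_eq_norm_sq ξ] at h
    exact h
  have hinner_tendsto : ∀ ξ : H, Tendsto (fun n => re ⟪T n ξ, ξ⟫) atTop (𝓝 (re ⟪Tl ξ, ξ⟫)) := by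
    intro ξ
    exact (RCLike.continuous_re.continuousAt.tendsto.comp
      ((hTl ξ).inner tendsto_const_nhds))
  have hfix_Tl_to_n : ∀ ξ : H, Tl ξ = ξ → ∀ n, T n ξ = ξ := by
    intro ξ hξ n
    apply hfix_eq
    refine le_antisymm (hinner_le ξ n) ?_
    have h1 : re ⟪Tl ξ, ξ⟫ ≤ re ⟪T n ξ, ξ⟫ :=
      le_of_tendsto (hinner_tendsto ξ) (eventually_atTop.2 ⟨n, fun m hm => hinner_mono ξ hm⟩)
    rw [hξ, inner_self_eq_norm_sq ξ] at h1
    exact h1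
  have hfix_n_to_Tl : ∀ ξ : H, (∀ n, T n ξ = ξ) → Tl ξ = ξ := by
    intro ξ h
    exact tendsto_nhds_unique (hTl ξ) (by simp only [h]; exact tendsto_const_nhds)
  -- P lemmas
  have hPapp : ∀ (n : ℕ) (ξ : H), P n (P n ξ) = P n ξ := by
    intro n ξ
    have := DFunLike.congr_fun (hP n) ξ
    simpa [ContinuousLinearMap.mul_apply] using this
  have hPfixT : ∀ (n : ℕ) (ξ : H), T n (P n ξ) = P n ξ := fun n ξ =>
    (hPfix n _).mp (hPapp n ξ)
  have hPP : ∀ n m, n ≤ m → ∀ ξ : H, P n (P m ξ) = P m ξ := by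
    intro n m hnm ξ
    exact (hPfix n _).mpr (hfix_mono n m hnm _ (hPfixT m ξ))
  have hPnormsq : ∀ (n : ℕ) (ξ : H), re ⟪ξ, P n ξ⟫ = ‖P n ξ‖ ^ 2 := by
    intro n ξ
    have h : ⟪P n ξ, P n ξ⟫ = ⟪ξ, P n ξ⟫ := by
      calc ⟪P n ξ, P n ξ⟫ = ⟪ξ, P n (P n ξ)⟫ := symm_clm (hPsa n) ξ (P n ξ)
      _ = ⟪ξ, P n ξ⟫ := by rw [hPapp]
    rw [← h, inner_self_eq_norm_sq]
  intro Pl hPlidem hPlsa hPlfix ξ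
  -- convergence of P n ξ
  have hkey : ∀ n m, n ≤ m → ‖P n ξ - P m ξ‖ ^ 2 = ‖P n ξ‖ ^ 2 - ‖P m ξ‖ ^ 2 := by
    intro n m hnm
    have hi : re ⟪P n ξ, P m ξ⟫ = ‖P m ξ‖ ^ 2 := by
      have : ⟪P n ξ, P m ξ⟫ = ⟪ξ, P m ξ⟫ := by
        calc ⟪P n ξ, P m ξ⟫ = ⟪ξ, P n (P m ξ)⟫ := symm_clm (hPsa n) ξ (P m ξ)
        _ = ⟪ξ, P m ξ⟫ := by rw [hPP n m hnm]
      rw [this, hPnormsq]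
    rw [norm_sub_sq (𝕜 := ℂ), hi]
    ring
  have hant : Antitone (fun n => ‖P n ξ‖ ^ 2) := by
    apply antitone_nat_of_succ_le
    intro n
    have := hkey n (n + 1) (Nat.le_succ n)
    nlinarith [sq_nonneg ‖P n ξ - P (n + 1) ξ‖]
  have hc : CauchySeq (fun n => P n ξ) :=
    cauchy_of_sq_diff hant (fun n => sq_nonneg _) (fun n m h => (hkey n m h).le)
  obtain ⟨η, hη⟩ := cauchySeq_tendsto_of_complete hc
  suffices hPlξ : Pl ξ = η by rwa [hPlξ]
  -- η is fixed by all T n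
  have hTnη : ∀ n, T n η = η := by
    intro n
    have h1 : Tendsto (fun k => T n (P k ξ)) atTop (𝓝 (T n η)) :=
      ((T n).continuous.continuousAt.tendsto).comp hη
    have h2 : (fun k => T n (P k ξ)) =ᶠ[atTop] fun k => P k ξ :=
      eventually_atTop.2 ⟨n, fun k hk => hfix_mono n k hk _ (hPfixT k ξ)⟩
    exact tendsto_nhds_unique (h1.congr' h2) hη
  have hPlη : Pl η = η := (hPlfix η).mpr (hfix_n_to_Tl η hTnη)
  set ζ := Pl (ξ - η) with hζdef
  have hPlζ : Pl ζ = ζ := by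
    rw [hζdef]
    simpa only [ContinuousLinearMap.mul_apply] using DFunLike.congr_fun hPlidem (ξ - η)
  have hζfix : ∀ n, P n ζ = ζ := fun n =>
    (hPfix n _).mpr (hfix_Tl_to_n _ ((hPlfix _).mp hPlζ) n)
  have hζnorm : (‖ζ‖ : ℝ) ^ 2 = re ⟪ξ - η, ζ⟫ := by
    have h : ⟪ζ, ζ⟫ = ⟪ξ - η, ζ⟫ := by
      calc ⟪ζ, ζ⟫ = ⟪Pl (ξ - η), ζ⟫ := rfl
      _ = ⟪ξ - η, Pl ζ⟫ := symm_clm hPlsa (ξ - η) ζ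
      _ = ⟪ξ - η, ζ⟫ := by rw [hPlζ]
    rw [← inner_self_eq_norm_sq (𝕜 := ℂ) ζ, h]
  have hzero : ∀ n, ⟪ξ - P n ξ, ζ⟫ = 0 := by
    intro n
    have h : ⟪P n ξ, ζ⟫ = ⟪ξ, ζ⟫ := by
      calc ⟪P n ξ, ζ⟫ = ⟪ξ, P n ζ⟫ := symm_clm (hPsa n) ξ ζ
      _ = ⟪ξ, ζ⟫ := by rw [hζfix]
    rw [inner_sub_left, h, sub_self]
  have hlim : ⟪ξ - η, ζ⟫ = 0 := by
    have h1 : Tendsto (fun n => ⟪ξ - P n ξ, ζ⟫) atTop (𝓝 ⟪ξ - η, ζ⟫) :=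
      (tendsto_const_nhds.sub hη).inner tendsto_const_nhds
    have h2 : Tendsto (fun n => ⟪ξ - P n ξ, ζ⟫) atTop (𝓝 (0 : ℂ)) := by
      simp only [hzero]; exact tendsto_const_nhds
    exact tendsto_nhds_unique h1 h2
  have hζ0 : ζ = 0 := by
    have h : (‖ζ‖ : ℝ) ^ 2 = 0 := by rw [hζnorm, hlim, map_zero]
    have : ‖ζ‖ = 0 := by nlinarith [norm_nonneg ζ]
    rwa [norm_eq_zero] at this
  have : Pl ξ = Pl η + Pl (ξ - η) := by
    rw [← map_add]
    congr 1
    abel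
  rw [this, hPlη, ← hζdef, hζ0, add_zero]
end
end

section
/- Let T₁ ≥ T₂ ≥ ⋯ be a non-increasing sequence of positive contractions on a Hilbert space H, with T = lim_n T_n (strong limit) and P the projection onto the fixed-point space of T. Setting S_n = T_n T_{n-1} ⋯ T₁, the adjoints S_n* converge strongly to P: for every ξ ∈ H, ‖S_n* ξ − Pξ‖ → 0. -/
open Filter Topology

noncomputable section

local notation "⟪" x ", " y "⟫" => @inner ℂ _ _ x y

variable {H : Type*} [NormedAddCommGroup H] [InnerProductSpace ℂ H] [CompleteSpace H]

/-- The product `T n * T (n+1) * ⋯ * T (n+k)`. -/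
private def Fop (T : ℕ → H →L[ℂ] H) : ℕ → ℕ → (H →L[ℂ] H)
  | 0, n => T n
  | (k+1), n => T n * Fop T k (n+1)

omit [CompleteSpace H] in
private lemma Fop_succ_right (T : ℕ → H →L[ℂ] H) :
    ∀ k n, Fop T (k+1) n = Fop T k n * T (n+k+1) := by
  intro k
  induction k with
  | zero => intro n; rfl
  | succ k ih =>
    intro n
    have h1 : Fop T (k+1+1) n = T n * Fop T (k+1) (n+1) := rfl
    rw [h1, ih (n+1), ← mul_assoc]
    have h2 : n+1+k+1 = n+(k+1)+1 := by omega
    rw [h2]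
    rfl

theorem stmt6 [TopologicalSpace.SeparableSpace H]
    (T : ℕ → H →L[ℂ] H) (hpos : ∀ n, 0 ≤ T n) (hcontr : ∀ n, T n ≤ 1)
    (hmono : ∀ n, T (n + 1) ≤ T n)
    (S : ℕ → H →L[ℂ] H) (hS0 : S 0 = T 0) (hSsucc : ∀ n, S (n + 1) = T (n + 1) ∘L S n)
    (Tlim : H →L[ℂ] H) (hTlim : ∀ ξ : H, Tendsto (fun n => T n ξ) atTop (nhds (Tlim ξ)))
    (P : H →L[ℂ] H) (hP : IsIdempotentElem P) (hPsa : IsSelfAdjoint P)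
    (hPfix : ∀ ξ : H, P ξ = ξ ↔ Tlim ξ = ξ) :
    ∀ ξ : H, Tendsto (fun n => ‖ContinuousLinearMap.adjoint (S n) ξ - P ξ‖) atTop (nhds 0) := by
  intro ξ
  have hTpos : ∀ n, (T n).IsPositive := fun n =>
    (ContinuousLinearMap.nonneg_iff_isPositive _).mp (hpos n)
  have hTsa : ∀ n, IsSelfAdjoint (T n) := fun n => (hTpos n).isSelfAdjoint
  -- monotonicity of quadratic forms
  have hle : ∀ {A B : H →L[ℂ] H}, A ≤ B → ∀ x : H,
      RCLike.re ⟪A x, x⟫ ≤ RCLike.re ⟪B x, x⟫ := by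
    intro A B h x
    have h2 := ((ContinuousLinearMap.le_def A B).mp h).2 x
    rw [ContinuousLinearMap.reApplyInnerSelf_apply, ContinuousLinearMap.sub_apply,
      inner_sub_left, map_sub] at h2
    linarith
  have hinner_one : ∀ x : H, RCLike.re ⟪(1 : H →L[ℂ] H) x, x⟫ = ‖x‖^2 := fun x => by
    rw [ContinuousLinearMap.one_apply, inner_self_eq_norm_sq]
  -- the key quadratic inequality for positive contractions
  have hsq : ∀ (B : H →L[ℂ] H), 0 ≤ B → B ≤ 1 → ∀ x : H,
      ‖B x‖^2 ≤ RCLike.re ⟪B x, x⟫ := by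
    intro B h0 h1 x
    have hBsa : IsSelfAdjoint B := ((ContinuousLinearMap.nonneg_iff_isPositive _).mp h0).isSelfAdjoint
    have h2 : B^2 ≤ B := by
      have := CStarAlgebra.pow_antitone h0 h1 (show (1:ℕ) ≤ 2 by norm_num)
      simpa using this
    have e1 : ⟪(B^2) x, x⟫ = ⟪B x, B x⟫ := by
      rw [pow_two, ContinuousLinearMap.mul_apply]
      calc ⟪B (B x), x⟫ = ⟪(ContinuousLinearMap.adjoint B) (B x), x⟫ := by rw [hBsa.adjoint_eq]
        _ = ⟪B x, B x⟫ := ContinuousLinearMap.adjoint_inner_left B x (B x)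
    calc ‖B x‖^2 = RCLike.re ⟪B x, B x⟫ := (inner_self_eq_norm_sq _).symm
      _ = RCLike.re ⟪(B^2) x, x⟫ := by rw [e1]
      _ ≤ RCLike.re ⟪B x, x⟫ := hle h2 x
  have hsqT : ∀ n (x : H), ‖T n x‖^2 ≤ RCLike.re ⟪T n x, x⟫ := fun n => hsq _ (hpos n) (hcontr n)
  have hnorm1 : ∀ (B : H →L[ℂ] H), 0 ≤ B → B ≤ 1 → ∀ x : H, ‖B x‖ ≤ ‖x‖ := by
    intro B h0 h1 x
    have h2 := hsq B h0 h1 x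
    have h3 : RCLike.re ⟪B x, x⟫ ≤ ‖B x‖ * ‖x‖ :=
      le_trans (RCLike.re_le_norm _) (norm_inner_le_norm _ _)
    nlinarith [norm_nonneg (B x), norm_nonneg x]
  -- Tlim is self-adjoint
  have hTlim_sa : IsSelfAdjoint Tlim := by
    rw [ContinuousLinearMap.isSelfAdjoint_iff_isSymmetric]
    intro x y
    have h1 : Tendsto (fun n => ⟪T n x, y⟫) atTop (nhds ⟪Tlim x, y⟫) :=
      (hTlim x).inner tendsto_const_nhds
    have h2 : Tendsto (fun n => ⟪x, T n y⟫) atTop (nhds ⟪x, Tlim y⟫) :=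
      tendsto_const_nhds.inner (hTlim y)
    have h3 : (fun n => ⟪T n x, y⟫) = fun n => ⟪x, T n y⟫ := by
      funext n
      exact (ContinuousLinearMap.isSelfAdjoint_iff_isSymmetric.mp (hTsa n)) x y
    rw [h3] at h1
    exact tendsto_nhds_unique h1 h2
  have hreTend : ∀ x : H, Tendsto (fun n => RCLike.re ⟪T n x, x⟫) atTop
      (nhds (RCLike.re ⟪Tlim x, x⟫)) := fun x =>
    (RCLike.continuous_re.tendsto _).comp ((hTlim x).inner tendsto_const_nhds)
  have hTlim_pos : (0 : H →L[ℂ] H) ≤ Tlim := by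
    rw [ContinuousLinearMap.nonneg_iff_isPositive]
    refine ⟨ContinuousLinearMap.isSelfAdjoint_iff_isSymmetric.mp hTlim_sa, fun x => ?_⟩
    rw [ContinuousLinearMap.reApplyInnerSelf_apply]
    exact ge_of_tendsto' (hreTend x) (fun n => (hTpos n).re_inner_nonneg_left x)
  have hTlim_le1 : Tlim ≤ 1 := by
    rw [ContinuousLinearMap.le_def]
    refine ⟨ContinuousLinearMap.isSelfAdjoint_iff_isSymmetric.mp ((IsSelfAdjoint.one (R := H →L[ℂ] H)).sub hTlim_sa : IsSelfAdjoint _), fun x => ?_⟩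
    rw [ContinuousLinearMap.reApplyInnerSelf_apply, ContinuousLinearMap.sub_apply,
      inner_sub_left, map_sub, sub_nonneg, ContinuousLinearMap.one_apply,
      inner_self_eq_norm_sq]
    refine le_of_tendsto' (hreTend x) (fun n => ?_)
    have := hle (hcontr n) x
    rwa [hinner_one] at this
  have hsqTlim := hsq Tlim hTlim_pos hTlim_le1
  -- Tlim ≤ T n
  have hanti : Antitone T := antitone_nat_of_succ_le hmono
  have hTlim_leT : ∀ n, Tlim ≤ T n := by
    intro n
    rw [ContinuousLinearMap.le_def]
    refine ⟨ContinuousLinearMap.isSelfAdjoint_iff_isSymmetric.mp ((hTsa n).sub hTlim_sa), fun x => ?_⟩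
    rw [ContinuousLinearMap.reApplyInnerSelf_apply, ContinuousLinearMap.sub_apply,
      inner_sub_left, map_sub, sub_nonneg]
    refine le_of_tendsto (hreTend x) (eventually_atTop.mpr ⟨n, fun m hm => ?_⟩)
    exact hle (hanti hm) x
  -- fixed vectors of Tlim are fixed by every T n
  have hfix : ∀ n (ζ : H), Tlim ζ = ζ → T n ζ = ζ := by
    intro n ζ hζ
    have h1 : RCLike.re ⟪T n ζ, ζ⟫ ≤ ‖ζ‖^2 := by
      have := hle (hcontr n) ζ; rwa [hinner_one] at this
    have h2 : ‖ζ‖^2 ≤ RCLike.re ⟪T n ζ, ζ⟫ := by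
      have := hle (hTlim_leT n) ζ
      rw [hζ, inner_self_eq_norm_sq] at this
      exact this
    have h5 := hsqT n ζ
    have h4 := norm_sub_sq (𝕜 := ℂ) (T n ζ) ζ
    have h3 : ‖T n ζ - ζ‖^2 ≤ 0 := by rw [h4]; linarith
    have h6 : ‖T n ζ - ζ‖^2 = 0 := le_antisymm h3 (sq_nonneg _)
    rw [pow_eq_zero_iff (by norm_num : (2:ℕ) ≠ 0), norm_eq_zero, sub_eq_zero] at h6
    exact h6
  -- interactions with P
  have hPP : ∀ ζ : H, P (P ζ) = P ζ := fun ζ => by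
    have := ContinuousLinearMap.ext_iff.mp hP ζ
    rwa [ContinuousLinearMap.mul_apply] at this
  have hTlimP : ∀ ζ : H, Tlim (P ζ) = P ζ := fun ζ => (hPfix (P ζ)).mp (hPP ζ)
  have hTP : ∀ n, T n * P = P := fun n => ContinuousLinearMap.ext fun ζ => by
    rw [ContinuousLinearMap.mul_apply]; exact hfix n (P ζ) (hTlimP ζ)
  have hTlimPop : Tlim * P = P := ContinuousLinearMap.ext fun ζ => by
    rw [ContinuousLinearMap.mul_apply]; exact hTlimP ζ
  have hPTlim : P * Tlim = P := by
    have h := congrArg star hTlimPop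
    rwa [star_mul, hPsa.star_eq, hTlim_sa.star_eq] at h
  have hSP : ∀ n, S n * P = P := by
    intro n
    induction n with
    | zero => rw [hS0]; exact hTP 0
    | succ n ih =>
      rw [hSsucc n, ← ContinuousLinearMap.mul_def, mul_assoc, ih]
      exact hTP (n+1)
  have hPSadj : ∀ n, P * ContinuousLinearMap.adjoint (S n) = P := by
    intro n
    have h := congrArg star (hSP n)
    rwa [star_mul, hPsa.star_eq, ContinuousLinearMap.star_eq_adjoint] at h
  have hPx : ∀ n, P (ContinuousLinearMap.adjoint (S n) ξ) = P ξ := fun n => by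
    have := ContinuousLinearMap.ext_iff.mp (hPSadj n) ξ
    rwa [ContinuousLinearMap.mul_apply] at this
  have hPinner : RCLike.re ⟪P ξ, ξ⟫ = ‖P ξ‖^2 := by
    have h2 : ⟪P ξ, ξ⟫ = ⟪P ξ, P ξ⟫ := by
      calc ⟪P ξ, ξ⟫ = ⟪(ContinuousLinearMap.adjoint P) (P ξ), ξ⟫ := by
            rw [hPsa.adjoint_eq, hPP]
        _ = ⟪P ξ, P ξ⟫ := ContinuousLinearMap.adjoint_inner_left P ξ (P ξ)
    rw [h2, inner_self_eq_norm_sq]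
  have hinnerP : ∀ n, RCLike.re ⟪ContinuousLinearMap.adjoint (S n) ξ, P ξ⟫ = ‖P ξ‖^2 := by
    intro n
    have h1 : ⟪ContinuousLinearMap.adjoint (S n) ξ, P ξ⟫
        = ⟪P (ContinuousLinearMap.adjoint (S n) ξ), ξ⟫ := by
      conv_lhs => rw [← hPsa.adjoint_eq]
      exact ContinuousLinearMap.adjoint_inner_right P _ ξ
    rw [h1, hPx n, hPinner]
  -- powers of Tlim
  have hpowsa : ∀ k, IsSelfAdjoint (Tlim ^ k) := fun k => hTlim_sa.pow k
  have hPpow : ∀ k, P * Tlim ^ k = P := by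
    intro k
    induction k with
    | zero => simp
    | succ k ih => rw [pow_succ, ← mul_assoc, ih, hPTlim]
  set z : ℕ → H := fun k => (Tlim ^ k) ξ with hz
  set b : ℕ → ℝ := fun j => RCLike.re ⟪(Tlim ^ j) ξ, ξ⟫ with hb
  have hb_anti : Antitone b := fun j m hjm =>
    hle (CStarAlgebra.pow_antitone hTlim_pos hTlim_le1 hjm) ξ
  have hb_nonneg : ∀ j, 0 ≤ b j := fun j =>
    ((ContinuousLinearMap.nonneg_iff_isPositive _).mp
      (CStarAlgebra.pow_nonneg hTlim_pos j)).re_inner_nonneg_left ξ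
  obtain ⟨c, hc⟩ : ∃ c, Tendsto b atTop (nhds c) :=
    ⟨_, tendsto_atTop_ciInf hb_anti ⟨0, by rintro y ⟨j, rfl⟩; exact hb_nonneg j⟩⟩
  have hzk : ∀ k m, ⟪z k, z m⟫ = ⟪(Tlim ^ (m+k)) ξ, ξ⟫ := by
    intro k m
    calc ⟪z k, z m⟫ = ⟪z k, (ContinuousLinearMap.adjoint (Tlim ^ m)) ξ⟫ := by
          rw [(hpowsa m).adjoint_eq]
      _ = ⟪(Tlim ^ m) (z k), ξ⟫ := ContinuousLinearMap.adjoint_inner_right _ _ _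
      _ = ⟪(Tlim ^ (m+k)) ξ, ξ⟫ := by
          rw [hz, ← ContinuousLinearMap.mul_apply, ← pow_add]
  have hnormz : ∀ k, ‖z k‖^2 = b (k+k) := fun k => by
    rw [← inner_self_eq_norm_sq (𝕜 := ℂ), hzk k k]
  have hzCauchy : CauchySeq z := by
    rw [Metric.cauchySeq_iff]
    intro ε hε
    obtain ⟨N, hN⟩ := (Metric.tendsto_atTop.mp hc) (ε^2/4) (by positivity)
    refine ⟨N, fun k hk m hm => ?_⟩
    have habs : ∀ j, N ≤ j → |b j - c| < ε^2/4 := fun j hj => by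
      have := hN j hj; rwa [Real.dist_eq] at this
    have h1 : ‖z k - z m‖^2 = b (k+k) - 2 * b (m+k) + b (m+m) := by
      rw [norm_sub_sq (𝕜 := ℂ), hnormz k, hnormz m, hzk k m]
    have d1 := habs (k+k) (by omega)
    have d2 := habs (m+k) (by omega)
    have d3 := habs (m+m) (by omega)
    rw [abs_lt] at d1 d2 d3
    have h2 : ‖z k - z m‖^2 < ε^2 := by rw [h1]; linarith
    rw [dist_eq_norm]
    exact lt_of_pow_lt_pow_left₀ 2 hε.le h2
  obtain ⟨η, hη⟩ := cauchySeq_tendsto_of_complete hzCauchy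
  have hTη : Tlim η = η := by
    have h1 : Tendsto (fun k => Tlim (z k)) atTop (nhds (Tlim η)) :=
      (Tlim.continuous.tendsto η).comp hη
    have h2 : (fun k => Tlim (z k)) = fun k => z (k+1) := by
      funext k
      show Tlim ((Tlim ^ k) ξ) = (Tlim ^ (k+1)) ξ
      rw [pow_succ', ContinuousLinearMap.mul_apply]
    rw [h2] at h1
    exact tendsto_nhds_unique h1 (hη.comp (tendsto_add_atTop_nat 1))
  have hPz : ∀ k, P (z k) = P ξ := fun k => by
    have := ContinuousLinearMap.ext_iff.mp (hPpow k) ξ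
    rwa [ContinuousLinearMap.mul_apply] at this
  have hηP : η = P ξ := by
    have h1 : Tendsto (fun k => P (z k)) atTop (nhds (P η)) :=
      (P.continuous.tendsto η).comp hη
    have h2 : (fun k => P (z k)) = fun _ => P ξ := funext hPz
    rw [h2] at h1
    have h3 : P η = P ξ := tendsto_nhds_unique h1 tendsto_const_nhds
    have h4 : P η = η := (hPfix η).mpr hTη
    rw [← h3, h4]
  have hzP : Tendsto z atTop (nhds (P ξ)) := hηP ▸ hη
  have hnormP : Tendsto (fun k => ‖z k‖^2) atTop (nhds (‖P ξ‖^2)) := hzP.norm.pow 2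
  -- products Fop converge to powers of Tlim
  have hFop : ∀ k, Tendsto (fun n => Fop T k n ξ) atTop (nhds ((Tlim ^ (k+1)) ξ)) := by
    intro k
    induction k with
    | zero => simpa [Fop, pow_one] using hTlim ξ
    | succ k ih =>
      rw [tendsto_iff_norm_sub_tendsto_zero]
      have hb1 : Tendsto (fun n => ‖Fop T k (n+1) ξ - (Tlim ^ (k+1)) ξ‖) atTop (nhds 0) :=
        tendsto_iff_norm_sub_tendsto_zero.mp (ih.comp (tendsto_add_atTop_nat 1))
      have hb2 : Tendsto (fun n => ‖T n ((Tlim ^ (k+1)) ξ) - Tlim ((Tlim ^ (k+1)) ξ)‖)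
          atTop (nhds 0) := tendsto_iff_norm_sub_tendsto_zero.mp (hTlim _)
      have hup : ∀ n, ‖Fop T (k+1) n ξ - (Tlim ^ (k+1+1)) ξ‖ ≤
          ‖Fop T k (n+1) ξ - (Tlim ^ (k+1)) ξ‖ +
          ‖T n ((Tlim ^ (k+1)) ξ) - Tlim ((Tlim ^ (k+1)) ξ)‖ := by
        intro n
        have e1 : Fop T (k+1) n ξ = T n (Fop T k (n+1) ξ) := rfl
        have e2 : (Tlim ^ (k+1+1)) ξ = Tlim ((Tlim ^ (k+1)) ξ) := by
          rw [pow_succ', ContinuousLinearMap.mul_apply]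
        have e3 : Fop T (k+1) n ξ - (Tlim ^ (k+1+1)) ξ =
            T n (Fop T k (n+1) ξ - (Tlim ^ (k+1)) ξ) +
            (T n ((Tlim ^ (k+1)) ξ) - Tlim ((Tlim ^ (k+1)) ξ)) := by
          rw [e1, e2, map_sub]; abel
        rw [e3]
        refine le_trans (norm_add_le _ _) ?_
        have := hnorm1 (T n) (hpos n) (hcontr n) (Fop T k (n+1) ξ - (Tlim ^ (k+1)) ξ)
        linarith
      have hsum : Tendsto (fun n => ‖Fop T k (n+1) ξ - (Tlim ^ (k+1)) ξ‖ +
          ‖T n ((Tlim ^ (k+1)) ξ) - Tlim ((Tlim ^ (k+1)) ξ)‖) atTop (nhds 0) := by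
        simpa using hb1.add hb2
      exact squeeze_zero (fun n => norm_nonneg _) hup hsum
  -- adjoint recursion and splitting
  have hSadj_succ : ∀ n, ContinuousLinearMap.adjoint (S (n+1)) =
      ContinuousLinearMap.adjoint (S n) * T (n+1) := by
    intro n
    rw [hSsucc n, ContinuousLinearMap.adjoint_comp, (hTsa (n+1)).adjoint_eq,
      ContinuousLinearMap.mul_def]
  have hsplit : ∀ k n, ContinuousLinearMap.adjoint (S (n+1+k)) =
      ContinuousLinearMap.adjoint (S n) * Fop T k (n+1) := by
    intro k
    induction k with
    | zero => intro n; exact hSadj_succ n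
    | succ k ih =>
      intro n
      have h1 : n+1+(k+1) = (n+1+k)+1 := by omega
      rw [h1, hSadj_succ (n+1+k), ih n, mul_assoc, ← Fop_succ_right]
  -- norms of S n
  have hSnorm : ∀ n, ‖S n‖ ≤ 1 := by
    intro n
    induction n with
    | zero =>
      rw [hS0]
      exact (CStarAlgebra.norm_le_one_iff_of_nonneg _ (hpos 0)).mpr (hcontr 0)
    | succ n ih =>
      rw [hSsucc n]
      calc ‖T (n+1) ∘L S n‖ ≤ ‖T (n+1)‖ * ‖S n‖ := ContinuousLinearMap.opNorm_comp_le _ _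
        _ ≤ 1 := mul_le_one₀
            ((CStarAlgebra.norm_le_one_iff_of_nonneg _ (hpos (n+1))).mpr (hcontr (n+1)))
            (norm_nonneg _) ih
  have hSadj_norm : ∀ n (v : H), ‖ContinuousLinearMap.adjoint (S n) v‖ ≤ ‖v‖ := by
    intro n v
    calc ‖ContinuousLinearMap.adjoint (S n) v‖
        ≤ ‖ContinuousLinearMap.adjoint (S n)‖ * ‖v‖ := ContinuousLinearMap.le_opNorm _ _
      _ ≤ 1 * ‖v‖ := by
          have h1 : ‖ContinuousLinearMap.adjoint (S n)‖ = ‖S n‖ :=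
            ContinuousLinearMap.adjoint.norm_map (S n)
          have := hSnorm n
          rw [h1]
          exact mul_le_mul_of_nonneg_right this (norm_nonneg v)
      _ = ‖v‖ := one_mul _
  -- final assembly
  rw [Metric.tendsto_atTop]
  intro ε hε
  have h1 : Tendsto (fun k => ‖z (k+1)‖^2) atTop (nhds (‖P ξ‖^2)) :=
    hnormP.comp (tendsto_add_atTop_nat 1)
  have hεsq : (0:ℝ) < ε^2 := by positivity
  obtain ⟨k, hk⟩ := (h1.eventually_lt_const
    (show ‖P ξ‖^2 < ‖P ξ‖^2 + ε^2/2 by linarith)).exists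
  have h2 : Tendsto (fun n => ‖Fop T k n ξ‖^2) atTop (nhds (‖z (k+1)‖^2)) :=
    (hFop k).norm.pow 2
  have h3 : ∀ᶠ n in atTop, ‖Fop T k n ξ‖^2 < ‖P ξ‖^2 + ε^2 :=
    h2.eventually_lt_const (by linarith)
  obtain ⟨N, hN⟩ := eventually_atTop.mp h3
  refine ⟨N + k + 1, fun m hm => ?_⟩
  obtain ⟨n, hn, rfl⟩ : ∃ n, N ≤ n ∧ n + 1 + k = m := ⟨m - k - 1, by omega, by omega⟩
  have hb1 : ‖ContinuousLinearMap.adjoint (S (n+1+k)) ξ‖ ≤ ‖Fop T k (n+1) ξ‖ := by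
    rw [hsplit k n, ContinuousLinearMap.mul_apply]
    exact hSadj_norm n _
  have hb2 : ‖Fop T k (n+1) ξ‖^2 < ‖P ξ‖^2 + ε^2 := hN (n+1) (by omega)
  have hb3 : ‖ContinuousLinearMap.adjoint (S (n+1+k)) ξ - P ξ‖^2 =
      ‖ContinuousLinearMap.adjoint (S (n+1+k)) ξ‖^2 - ‖P ξ‖^2 := by
    rw [norm_sub_sq (𝕜 := ℂ), hinnerP]; ring
  have hb4 : ‖ContinuousLinearMap.adjoint (S (n+1+k)) ξ - P ξ‖^2 < ε^2 := by
    rw [hb3]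
    have := pow_le_pow_left₀ (norm_nonneg _) hb1 2
    linarith
  rw [Real.dist_eq, sub_zero, abs_of_nonneg (norm_nonneg _)]
  exact lt_of_pow_lt_pow_left₀ 2 hε.le hb4
end
end

section
/- Let T₁ ≥ T₂ ≥ ⋯ be a non-increasing sequence of positive contractions on a Hilbert space H with strong limit T, and P the projection onto the fixed point space of T. Then S_n = T_n ⋯ T₁ converges to P in the weak operator topology: for all ξ, η ∈ H, ⟨S_n ξ, η⟩ → ⟨Pξ, η⟩. -/
open Filter Topology RCLike ContinuousLinearMap

noncomputable section

local notation "⟪" x ", " y "⟫" => @inner ℂ _ _ x y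

variable {H : Type*} [NormedAddCommGroup H] [InnerProductSpace ℂ H] [CompleteSpace H]

lemma aux_symm {A : H →L[ℂ] H} (h : 0 ≤ A) (x y : H) : ⟪A x, y⟫ = ⟪x, A y⟫ :=
  (isSelfAdjoint_iff_isSymmetric.mp ((nonneg_iff_isPositive A).mp h).isSelfAdjoint) x y

lemma aux_nonneg {A : H →L[ℂ] H} (h : 0 ≤ A) (x : H) : 0 ≤ re ⟪A x, x⟫ :=
  (RCLike.nonneg_iff.mp (((nonneg_iff_isPositive A).mp h).inner_nonneg_left x)).1

lemma aux_mono {A B : H →L[ℂ] H} (h : A ≤ B) (x : H) : re ⟪A x, x⟫ ≤ re ⟪B x, x⟫ := by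
  have h2 := ((le_def A B).mp h).inner_nonneg_left x
  simp only [ContinuousLinearMap.sub_apply, inner_sub_left, map_sub] at h2
  have h3 := (RCLike.nonneg_iff.mp h2).1
  simp only [map_sub] at h3
  linarith

lemma aux_sq {A : H →L[ℂ] H} (h0 : 0 ≤ A) (h1 : A ≤ 1) (x : H) :
    ‖A x‖ ^ 2 ≤ re ⟪A x, x⟫ := by
  have h2 : A ^ 2 ≤ A := by
    simpa using CStarAlgebra.pow_antitone h0 h1 (show 1 ≤ 2 by norm_num)
  have h3 : re ⟪(A ^ 2) x, x⟫ = ‖A x‖ ^ 2 := by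
    rw [sq, ContinuousLinearMap.mul_apply, aux_symm h0 (A x) x]
    rw [← inner_self_eq_norm_sq (𝕜 := ℂ) (A x)]
  calc ‖A x‖ ^ 2 = re ⟪(A ^ 2) x, x⟫ := h3.symm
    _ ≤ re ⟪A x, x⟫ := aux_mono h2 x

lemma aux_contr {A : H →L[ℂ] H} (h0 : 0 ≤ A) (h1 : A ≤ 1) (x : H) : ‖A x‖ ≤ ‖x‖ := by
  rcases eq_or_lt_of_le (norm_nonneg (A x)) with h | h
  · rw [← h]; exact norm_nonneg x
  · have h2 := aux_sq h0 h1 x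
    have h3 : re ⟪A x, x⟫ ≤ ‖A x‖ * ‖x‖ :=
      (re_le_norm _).trans (norm_inner_le_norm _ _)
    nlinarith

lemma aux_eq_zero {A : H →L[ℂ] H} (h0 : 0 ≤ A) (h1 : A ≤ 1) (x : H)
    (h : re ⟪A x, x⟫ ≤ 0) : A x = 0 := by
  have h2 := aux_sq h0 h1 x
  have : ‖A x‖ ^ 2 ≤ 0 := h2.trans h
  have : ‖A x‖ = 0 := by nlinarith [norm_nonneg (A x)]
  simpa using this

theorem stmt7 [TopologicalSpace.SeparableSpace H]
    (T : ℕ → H →L[ℂ] H) (hpos : ∀ n, 0 ≤ T n) (hcontr : ∀ n, T n ≤ 1)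
    (hmono : ∀ n, T (n + 1) ≤ T n)
    (S : ℕ → H →L[ℂ] H) (hS0 : S 0 = T 0) (hSsucc : ∀ n, S (n + 1) = T (n + 1) ∘L S n)
    (Tlim : H →L[ℂ] H) (hTlim : ∀ ξ : H, Tendsto (fun n => T n ξ) atTop (nhds (Tlim ξ)))
    (P : H →L[ℂ] H) (hP : IsIdempotentElem P) (hPsa : IsSelfAdjoint P)
    (hPfix : ∀ ξ : H, P ξ = ξ ↔ Tlim ξ = ξ) :
    ∀ ξ η : H, Tendsto (fun n => ⟪S n ξ, η⟫) atTop (nhds ⟪P ξ, η⟫) := by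
  -- basic positivity facts about 1 - T m
  have h0' : ∀ m, 0 ≤ 1 - T m := fun m => by
    have := hcontr m
    rw [ContinuousLinearMap.le_def] at this ⊢
    simpa using this
  have h1' : ∀ m, (1 : H →L[ℂ] H) - T m ≤ 1 := fun m => by
    have := hpos m
    rw [ContinuousLinearMap.le_def] at this ⊢
    simpa using this
  have hTanti : ∀ {m n : ℕ}, m ≤ n → T n ≤ T m := fun {m n} h =>
    antitone_nat_of_succ_le hmono h
  -- fixed points of Tlim are fixed by every T m
  have hfix : ∀ v : H, Tlim v = v → ∀ m, T m v = v := by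
    intro v hv m
    have hlim : Tendsto (fun n => re ⟪(1 - T n) v, v⟫) atTop (nhds 0) := by
      have h1 : Tendsto (fun n => ⟪v - T n v, v⟫) atTop (nhds ⟪v - Tlim v, v⟫) :=
        (tendsto_const_nhds.sub (hTlim v)).inner tendsto_const_nhds
      rw [hv, sub_self, inner_zero_left] at h1
      have := (RCLike.continuous_re.tendsto (0 : ℂ)).comp h1
      simpa [Function.comp_def] using this
    have hle : re ⟪(1 - T m) v, v⟫ ≤ 0 := by
      refine ge_of_tendsto hlim (eventually_atTop.2 ⟨m, fun n hn => ?_⟩)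
      exact aux_mono (by simpa using sub_le_sub_left (hTanti hn) 1) v
    have := aux_eq_zero (h0' m) (h1' m) v hle
    have h2 : v - T m v = 0 := by simpa using this
    rw [sub_eq_zero] at h2
    exact h2.symm
  intro ξ η
  -- norms of S n ξ
  set a : ℕ → ℝ := fun n => ‖S n ξ‖ with ha_def
  have ha_succ : ∀ n, a (n + 1) ≤ a n := by
    intro n
    simp only [ha_def, hSsucc n, ContinuousLinearMap.comp_apply]
    exact aux_contr (hpos (n+1)) (hcontr (n+1)) _
  have ha_anti : Antitone a := antitone_nat_of_succ_le ha_succ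
  have ha_nonneg : ∀ n, 0 ≤ a n := fun n => norm_nonneg _
  have ha_bdd : BddBelow (Set.range a) := ⟨0, by rintro x ⟨n, rfl⟩; exact ha_nonneg n⟩
  set c : ℝ := ⨅ n, a n with hc_def
  have hac : Tendsto a atTop (nhds c) := tendsto_atTop_ciInf ha_anti ha_bdd
  have hbound : ∀ n, ‖S n ξ‖ ≤ ‖ξ‖ := by
    intro n
    induction n with
    | zero => rw [hS0]; exact aux_contr (hpos 0) (hcontr 0) ξ
    | succ n ih =>
      calc ‖S (n+1) ξ‖ ≤ ‖S n ξ‖ := ha_succ n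
        _ ≤ ‖ξ‖ := ih
  -- Key 1 : ⟪T (n+1) (S n ξ), S n ξ⟫ → c ^ 2
  have key1 : Tendsto (fun n => re ⟪T (n + 1) (S n ξ), S n ξ⟫) atTop (nhds (c ^ 2)) := by
    have hlow : Tendsto (fun n => a (n + 1) ^ 2) atTop (nhds (c ^ 2)) :=
      (hac.comp (tendsto_add_atTop_nat 1)).pow 2
    have hupp : Tendsto (fun n => a (n + 1) * a n) atTop (nhds (c ^ 2)) := by
      have := (hac.comp (tendsto_add_atTop_nat 1)).mul hac
      simpa [sq] using this
    refine tendsto_of_tendsto_of_tendsto_of_le_of_le hlow hupp (fun n => ?_) (fun n => ?_)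
    · have := aux_sq (hpos (n+1)) (hcontr (n+1)) (S n ξ)
      have he : a (n + 1) = ‖T (n+1) (S n ξ)‖ := by
        simp [ha_def, hSsucc n]
      rw [he]; exact this
    · have h3 : re ⟪T (n+1) (S n ξ), S n ξ⟫ ≤ ‖T (n+1) (S n ξ)‖ * ‖S n ξ‖ :=
        (re_le_norm _).trans (norm_inner_le_norm _ _)
      have he : a (n + 1) = ‖T (n+1) (S n ξ)‖ := by
        simp [ha_def, hSsucc n]
      rw [he]; exact h3
  -- Key 2 : for each m, ⟪(1 - T m) (S n ξ), S n ξ⟫ → 0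
  have key2 : ∀ m, Tendsto (fun n => re ⟪(1 - T m) (S n ξ), S n ξ⟫) atTop (nhds 0) := by
    intro m
    have hupp : Tendsto (fun n => a n ^ 2 - re ⟪T (n + 1) (S n ξ), S n ξ⟫) atTop (nhds 0) := by
      have := (hac.pow 2).sub key1
      simpa using this
    refine tendsto_of_tendsto_of_tendsto_of_le_of_le' tendsto_const_nhds hupp
      (Eventually.of_forall fun n => aux_nonneg (h0' m) (S n ξ)) ?_
    refine eventually_atTop.2 ⟨m, fun n hn => ?_⟩
    have h4 : re ⟪(1 - T m) (S n ξ), S n ξ⟫ ≤ re ⟪(1 - T (n + 1)) (S n ξ), S n ξ⟫ :=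
      aux_mono (by simpa using sub_le_sub_left (hTanti (hn.trans (Nat.le_succ n))) 1) _
    have h5 : re ⟪(1 - T (n + 1)) (S n ξ), S n ξ⟫
        = a n ^ 2 - re ⟪T (n + 1) (S n ξ), S n ξ⟫ := by
      simp only [ContinuousLinearMap.sub_apply, ContinuousLinearMap.one_apply,
        inner_sub_left, map_sub, ha_def]
      rw [inner_self_eq_norm_sq (𝕜 := ℂ) (S n ξ)]
    rw [h5] at h4
    exact h4
  -- the closed subspace W
  set W : Submodule ℂ H :=
    (Submodule.span ℂ (⋃ m : ℕ, Set.range ((1 - T m : H →L[ℂ] H) : H → H))).topologicalClosure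
    with hW_def
  -- every element of W is "killed" weakly
  have keyW : ∀ v ∈ W, Tendsto (fun n => ⟪S n ξ, v⟫) atTop (nhds 0) := by
    set V : Submodule ℂ H :=
      { carrier := {y | Tendsto (fun n => ⟪S n ξ, y⟫) atTop (nhds 0)}
        add_mem' := fun {y z} hy hz => by
          simpa [inner_add_right] using hy.add hz
        zero_mem' := by
          simpa using (tendsto_const_nhds : Tendsto (fun _ : ℕ => (0:ℂ)) atTop (nhds 0))
        smul_mem' := fun c y hy => by
          simpa [inner_smul_right] using hy.const_mul c } with hV_def
    have hclosed : IsClosed (V : Set H) := by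
      refine isClosed_of_closure_subset ?_
      intro y hy
      rw [Metric.mem_closure_iff] at hy
      show Tendsto (fun n => ⟪S n ξ, y⟫) atTop (nhds 0)
      rw [Metric.tendsto_atTop]
      intro ε hε
      obtain ⟨z, hzV, hdist⟩ := hy (ε / (2 * (‖ξ‖ + 1))) (by positivity)
      have hzt : Tendsto (fun n => ⟪S n ξ, z⟫) atTop (nhds 0) := hzV
      rw [Metric.tendsto_atTop] at hzt
      obtain ⟨N, hN⟩ := hzt (ε / 2) (by positivity)
      refine ⟨N, fun n hn => ?_⟩
      rw [dist_zero_right]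
      have h1 : (⟪S n ξ, y⟫ : ℂ) = ⟪S n ξ, z⟫ + ⟪S n ξ, y - z⟫ := by
        rw [← inner_add_right]; congr 1; abel
      have h2 : ‖(⟪S n ξ, y - z⟫ : ℂ)‖ ≤ ‖ξ‖ * ‖y - z‖ :=
        (norm_inner_le_norm _ _).trans (by gcongr; exact hbound n)
      have h3 : ‖y - z‖ < ε / (2 * (‖ξ‖ + 1)) := by
        rw [← dist_eq_norm]; exact hdist
      have h4 : ‖ξ‖ * ‖y - z‖ ≤ ε / 2 := by
        have h5 : ‖ξ‖ * ‖y - z‖ ≤ (‖ξ‖ + 1) * (ε / (2 * (‖ξ‖ + 1))):= by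
          apply mul_le_mul (by linarith) h3.le (norm_nonneg _) (by positivity)
        have h6 : (‖ξ‖ + 1) * (ε / (2 * (‖ξ‖ + 1))) = ε / 2 := by
          field_simp
        linarith
      have h7 := hN n hn
      rw [dist_zero_right] at h7
      calc ‖(⟪S n ξ, y⟫ : ℂ)‖ ≤ ‖(⟪S n ξ, z⟫ : ℂ)‖ + ‖(⟪S n ξ, y - z⟫ : ℂ)‖ := by
            rw [h1]; exact norm_add_le _ _
        _ < ε / 2 + ε / 2 := by
            have := h2.trans h4
            apply add_lt_add_of_lt_of_le h7 this
        _ = ε := by ring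
    have hVle : W ≤ V := by
      refine Submodule.topologicalClosure_minimal _ (Submodule.span_le.2 ?_) hclosed
      rintro x hx
      obtain ⟨m, w, rfl⟩ : ∃ m w, (1 - T m : H →L[ℂ] H) w = x := by
        rw [Set.mem_iUnion] at hx
        obtain ⟨m, w, rfl⟩ := hx
        exact ⟨m, w, rfl⟩
      show Tendsto (fun n => ⟪S n ξ, (1 - T m : H →L[ℂ] H) w⟫) atTop (nhds 0)
      have hg : Tendsto (fun n => Real.sqrt (re ⟪(1 - T m) (S n ξ), S n ξ⟫) * ‖w‖)
          atTop (nhds 0) := by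
        have := ((Real.continuous_sqrt.tendsto 0).comp (key2 m)).mul_const ‖w‖
        simpa using this
      refine squeeze_zero_norm (fun n => ?_) hg
      rw [← aux_symm (h0' m)]
      have h8 : ‖(⟪(1 - T m : H →L[ℂ] H) (S n ξ), w⟫ : ℂ)‖
          ≤ ‖(1 - T m : H →L[ℂ] H) (S n ξ)‖ * ‖w‖ := norm_inner_le_norm _ _
      have h9 : ‖(1 - T m : H →L[ℂ] H) (S n ξ)‖
          ≤ Real.sqrt (re ⟪(1 - T m) (S n ξ), S n ξ⟫) := by
        have h10 := Real.sqrt_le_sqrt (aux_sq (h0' m) (h1' m) (S n ξ))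
        rwa [Real.sqrt_sq (norm_nonneg _)] at h10
      exact h8.trans (by gcongr)
    exact fun v hv => hVle hv
  -- decompose η
  set v : H := η - P η with hv_def
  have hPPη : P (P η) = P η := by
    conv_rhs => rw [← hP]
    rfl
  have hPsymm : ∀ x y : H, ⟪P x, y⟫ = ⟪x, P y⟫ :=
    isSelfAdjoint_iff_isSymmetric.mp hPsa
  have hPv : P v = 0 := by
    simp [hv_def, map_sub, hPPη]
  -- Part A : ⟪S n ξ, P η⟫ is constant
  have hfixPη : ∀ m, T m (P η) = P η := hfix (P η) ((hPfix (P η)).mp hPPη)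
  have hconst : ∀ n, ⟪S n ξ, P η⟫ = ⟪ξ, P η⟫ := by
    intro n
    induction n with
    | zero => rw [hS0, aux_symm (hpos 0), hfixPη 0]
    | succ n ih =>
      rw [hSsucc n, ContinuousLinearMap.comp_apply, aux_symm (hpos (n+1)), hfixPη (n+1)]
      exact ih
  -- Part B : v ∈ W
  have hvW : v ∈ W := by
    haveI : CompleteSpace W := (Submodule.isClosed_topologicalClosure _).completeSpace_coe
    obtain ⟨w, hw, u, hu, hvwu⟩ := W.exists_add_mem_mem_orthogonal v
    have humem : ∀ m, ((1 - T m : H →L[ℂ] H) u) ∈ W := fun m =>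
      Submodule.le_topologicalClosure _
        (Submodule.subset_span (Set.mem_iUnion.2 ⟨m, Set.mem_range_self u⟩))
    have hum : ∀ m, T m u = u := by
      intro m
      have h6 : ⟪(1 - T m : H →L[ℂ] H) u, u⟫ = 0 :=
        (Submodule.mem_orthogonal W u).mp hu _ (humem m)
      have := aux_eq_zero (h0' m) (h1' m) u (by rw [h6]; simp)
      have h7 : u - T m u = 0 := by simpa using this
      rw [sub_eq_zero] at h7
      exact h7.symm
    have hTlimu : Tlim u = u := by
      have h8 : Tendsto (fun n : ℕ => T n u) atTop (nhds u) := by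
        simpa [hum] using (tendsto_const_nhds : Tendsto (fun _ : ℕ => u) atTop (nhds u))
      exact tendsto_nhds_unique (hTlim u) h8
    have hPu : P u = u := (hPfix u).mpr hTlimu
    have hu0 : u = 0 := by
      have h9 : ⟪v, u⟫ = 0 := by
        rw [← hPu, ← hPsymm v u, hPv, inner_zero_left]
      have h10 : ⟪w, u⟫ = 0 := (Submodule.mem_orthogonal W u).mp hu w hw
      rw [hvwu, inner_add_left, h10, zero_add] at h9
      exact inner_self_eq_zero.mp h9
    rw [hvwu, hu0, add_zero]
    exact hw
  have hBv : Tendsto (fun n => ⟪S n ξ, v⟫) atTop (nhds 0) := keyW v hvW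
  -- combine
  have hsplit : (fun n => ⟪S n ξ, η⟫) = fun n => ⟪ξ, P η⟫ + ⟪S n ξ, v⟫ := by
    funext n
    rw [← hconst n, ← inner_add_right]
    congr 1
    simp [hv_def]
  have hPξη : ⟪P ξ, η⟫ = ⟪ξ, P η⟫ := hPsymm ξ η
  rw [hsplit, hPξη]
  simpa using (tendsto_const_nhds :
    Tendsto (fun _ : ℕ => (⟪ξ, P η⟫ : ℂ)) atTop (nhds ⟪ξ, P η⟫)).add hBv
end
end

section
/- Let T, T′ be positive contractions on H with T′ ≤ T. Suppose δ ∈ (0,1) satisfies σ(T) ∩ (1−δ, 1) = ∅ and σ(T′) ∩ (1−δ, 1) ≠ ∅. Then the projection P′ onto the fixed-point space of T′ is strictly smaller than the projection P onto the fixed-point space of T (P′ ≤ P and P′ ≠ P). -/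
open Filter Topology

noncomputable section

local notation "⟪" x ", " y "⟫" => @inner ℂ _ _ x y

variable {H : Type*} [NormedAddCommGroup H] [InnerProductSpace ℂ H] [CompleteSpace H]

/-- If `0 ≤ A ≤ C` and `C ξ = 0` then `A ξ = 0`. -/
private lemma aux_zero (A C : H →L[ℂ] H) (hA : 0 ≤ A) (hAC : A ≤ C) (ξ : H)
    (hξ : C ξ = 0) : A ξ = 0 := by
  have h1 : 0 ≤ RCLike.re ⟪ξ, A ξ⟫ :=
    ((ContinuousLinearMap.nonneg_iff_isPositive A).mp hA).re_inner_nonneg_right ξ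
  have h2 : 0 ≤ RCLike.re ⟪ξ, (C - A) ξ⟫ :=
    ((ContinuousLinearMap.nonneg_iff_isPositive (C - A)).mp
      (sub_nonneg.mpr hAC)).re_inner_nonneg_right ξ
  have h3 : RCLike.re ⟪ξ, (C - A) ξ⟫ = -RCLike.re ⟪ξ, A ξ⟫ := by
    simp [ContinuousLinearMap.sub_apply, hξ, inner_sub_right]
  have h4 : RCLike.re ⟪ξ, A ξ⟫ = 0 := by rw [h3] at h2; linarith
  -- use the square root of A
  have hs := CFC.sqrt_mul_sqrt_self A hA
  have hssa : IsSelfAdjoint (CFC.sqrt A) := IsSelfAdjoint.of_nonneg (CFC.sqrt_nonneg A)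
  set s := CFC.sqrt A with hsdef
  have h5 : ⟪s ξ, s ξ⟫ = ⟪ξ, A ξ⟫ := by
    rw [← hs]
    exact (ContinuousLinearMap.isSelfAdjoint_iff_isSymmetric.mp hssa) ξ (s ξ)
  have h6 : ‖s ξ‖ ^ 2 = 0 := by
    rw [← inner_self_eq_norm_sq (𝕜 := ℂ), h5, h4]
  have h7 : s ξ = 0 := by
    have := sq_eq_zero_iff.mp h6
    exact norm_eq_zero.mp this
  calc A ξ = s (s ξ) := by rw [← hs]; rfl
    _ = 0 := by rw [h7]; simp

/-- Upper bound for the spectrum from an operator inequality. -/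
private lemma aux_ub (B : H →L[ℂ] H) (c : ℝ) (h : B ≤ algebraMap ℝ _ c) (x : ℝ)
    (hx : x ∈ spectrum ℝ B) : x ≤ c := by
  have h0 : (0:H→L[ℂ]H) ≤ algebraMap ℝ _ c - B := sub_nonneg.mpr h
  have hmem : c - x ∈ spectrum ℝ (algebraMap ℝ (H→L[ℂ]H) c - B) := by
    rw [← spectrum.singleton_sub_eq]
    exact Set.sub_mem_sub rfl hx
  linarith [spectrum_nonneg_of_nonneg (𝕜 := ℝ) h0 hmem]

private lemma aux_smul_nonneg (P : H →L[ℂ] H) (hP : IsIdempotentElem P)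
    (hPsa : IsSelfAdjoint P) (c : ℝ) (hc : 0 ≤ c) : (0:H →L[ℂ] H) ≤ c • P := by
  have h := star_mul_self_nonneg (Real.sqrt c • P)
  rwa [star_smul, star_trivial, smul_mul_smul_comm, hPsa.star_eq, hP.eq,
    Real.mul_self_sqrt hc] at h

private def gfun (δ : ℝ) : ℝ → ℝ := fun x => max ((x - (1 - δ))/δ) 0

private lemma gfun_cont (δ : ℝ) : Continuous (gfun δ) := by unfold gfun; fun_prop

private lemma gfun_zero (δ : ℝ) (hδ0 : 0 < δ) {x : ℝ} (hx : x ≤ 1 - δ) : gfun δ x = 0 :=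
  max_eq_right (div_nonpos_of_nonpos_of_nonneg (by linarith) hδ0.le)

private lemma gfun_one (δ : ℝ) (hδ0 : 0 < δ) : gfun δ 1 = 1 := by
  simp only [gfun]
  rw [show (1:ℝ) - (1 - δ) = δ by ring, div_self hδ0.ne']
  simp


set_option maxHeartbeats 1000000 in
set_option synthInstance.maxHeartbeats 400000 in
theorem stmt13 (T T' : H →L[ℂ] H) (h0 : 0 ≤ T') (hTT' : T' ≤ T) (h1 : T ≤ 1)
    (δ : ℝ) (hδ0 : 0 < δ) (hδ1 : δ < 1)
    (hgapT : ∀ t : ℝ, 1 - δ < t → t < 1 → (t : ℂ) ∉ spectrum ℂ T)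
    (hT' : ∃ t : ℝ, 1 - δ < t ∧ t < 1 ∧ (t : ℂ) ∈ spectrum ℂ T')
    (P P' : H →L[ℂ] H)
    (hP : IsIdempotentElem P) (hPsa : IsSelfAdjoint P) (hPfix : ∀ ξ : H, P ξ = ξ ↔ T ξ = ξ)
    (hP' : IsIdempotentElem P') (hP'sa : IsSelfAdjoint P')
    (hP'fix : ∀ ξ : H, P' ξ = ξ ↔ T' ξ = ξ) :
    P' ≤ P ∧ P' ≠ P := by
  obtain ⟨t, ht1, ht2, htmem⟩ := hT'
  have hδ2 : (0:ℝ) < 1 - δ := by linarith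
  have ht0 : (0:ℝ) < t := lt_trans hδ2 ht1
  have hT0 : (0:H→L[ℂ]H) ≤ T := h0.trans hTT'
  have hTsa : IsSelfAdjoint T := .of_nonneg hT0
  have hT'sa : IsSelfAdjoint T' := .of_nonneg h0
  -- fixed points of T' are fixed points of T
  have hfix : ∀ ξ : H, T' ξ = ξ → T ξ = ξ := by
    intro ξ hξ
    have hC : (1 - T') ξ = 0 := by
      simp [ContinuousLinearMap.sub_apply, hξ]
    have hz := aux_zero (1 - T) (1 - T') (sub_nonneg.mpr h1) (sub_le_sub_left hTT' 1) ξ hC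
    have h2 : ξ - T ξ = 0 := by
      simpa [ContinuousLinearMap.sub_apply] using hz
    rw [sub_eq_zero] at h2
    exact h2.symm
  -- P' ≤ P
  have hPP' : P * P' = P' := by
    ext ξ
    simp only [ContinuousLinearMap.mul_apply]
    refine (hPfix _).mpr (hfix _ ((hP'fix _).mp ?_))
    have := DFunLike.congr_fun hP'.eq ξ
    simpa [ContinuousLinearMap.mul_apply] using this
  have hP'P : P' * P = P' := by
    have h := congrArg star hPP'
    rwa [star_mul, hPsa.star_eq, hP'sa.star_eq] at h
  have hle : P' ≤ P := by
    have hidem : (P - P') * (P - P') = P - P' := by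
      rw [sub_mul, mul_sub, mul_sub, hP.eq, hP'.eq, hPP', hP'P]
      abel
    have h := star_mul_self_nonneg (P - P')
    rw [(hPsa.sub hP'sa).star_eq, hidem] at h
    exact sub_nonneg.mp h
  refine ⟨hle, ?_⟩
  intro heq
  -- spectrum of T is contained in (-∞, 1-δ] ∪ {1}
  have hspecT : ∀ x ∈ spectrum ℝ T, x ≤ 1 - δ ∨ x = 1 := by
    intro x hx
    have hx1 : x ≤ 1 := aux_ub T 1 (by rwa [map_one]) x hx
    rcases le_or_gt x (1 - δ) with h | h
    · exact Or.inl h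
    · right
      by_contra hne
      refine hgapT x h (lt_of_le_of_ne hx1 hne) ?_
      have := spectrum.algebraMap_mem ℂ hx
      simpa using this
  -- the spectral projection via cfc
  obtain ⟨g, hgdef⟩ : ∃ g : ℝ → ℝ, g = gfun δ := ⟨_, rfl⟩
  have hgc : Continuous g := hgdef ▸ gfun_cont δ
  obtain ⟨Q, hQdef⟩ : ∃ Q : H →L[ℂ] H, Q = cfc g T := ⟨_, rfl⟩
  have hQsa : IsSelfAdjoint Q := hQdef ▸ cfc_predicate g T
  have hg_zero : ∀ x : ℝ, x ≤ 1 - δ → g x = 0 := fun x hx => hgdef ▸ gfun_zero δ hδ0 hx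
  have hg_one : g 1 = 1 := hgdef ▸ gfun_one δ hδ0
  have hTQ : T * Q = Q := by
    have e : cfc (fun x : ℝ => x * g x) T = cfc (fun x : ℝ => x) T * cfc g T :=
      cfc_mul _ _ T (continuous_id'.continuousOn) hgc.continuousOn
    have e2 : cfc (fun x : ℝ => x * g x) T = cfc g T := by
      apply cfc_congr
      intro x hx
      show x * g x = g x
      rcases hspecT x hx with h | h
      · rw [hg_zero x h, mul_zero]
      · rw [h, one_mul]
    calc T * Q = cfc (fun x : ℝ => x) T * cfc g T := by rw [hQdef, cfc_id' ℝ T]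
      _ = cfc (fun x : ℝ => x * g x) T := e.symm
      _ = cfc g T := e2
      _ = Q := hQdef.symm
  have hPQ : P * Q = Q := by
    ext ξ
    simp only [ContinuousLinearMap.mul_apply]
    refine (hPfix _).mpr ?_
    have := DFunLike.congr_fun hTQ ξ
    simpa [ContinuousLinearMap.mul_apply] using this
  have hQP : Q * P = Q := by
    have h := congrArg star hPQ
    rwa [star_mul, hPsa.star_eq, hQsa.star_eq] at h
  -- the key spectral gap inequality
  have hgc1 : Continuous (fun x : ℝ => 1 - g x) := continuous_const.sub hgc
  have hc1 : cfc (fun x : ℝ => 1 - g x) T = 1 - Q := by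
    rw [cfc_sub (fun _ => (1:ℝ)) g T continuous_const.continuousOn hgc.continuousOn,
      cfc_const (1:ℝ) T, map_one, hQdef]
  have key : T * (1 - Q) ≤ (1 - δ) • (1 - Q) := by
    have e1 : T * (1 - Q) = cfc (fun x : ℝ => x * (1 - g x)) T := by
      rw [cfc_mul _ _ T continuous_id'.continuousOn hgc1.continuousOn, cfc_id' ℝ T, hc1]
    have e2 : (1 - δ) • (1 - Q) = cfc (fun x : ℝ => (1 - δ) * (1 - g x)) T := by
      rw [cfc_const_mul _ _ T hgc1.continuousOn, hc1]
    rw [e1, e2]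
    apply cfc_mono (hf := (continuous_id.mul hgc1).continuousOn)
      (hg := (continuous_const.mul hgc1).continuousOn)
    intro x hx
    show x * (1 - g x) ≤ (1 - δ) * (1 - g x)
    rcases hspecT x hx with h | h
    · rw [hg_zero x h]
      simpa using h
    · rw [h, hg_one]
      simp
  have hsa1P : IsSelfAdjoint (1 - P : H →L[ℂ] H) := (IsSelfAdjoint.one (H →L[ℂ] H)).sub hPsa
  have hQ1P : (1 - Q) * (1 - P) = 1 - P := by
    rw [sub_mul, one_mul, mul_sub, hQP, mul_one, sub_self, sub_zero]
  have h1PQ : (1 - P) * (1 - Q) = 1 - P := by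
    have h := congrArg star hQ1P
    rwa [star_mul, hsa1P.star_eq, ((IsSelfAdjoint.one (H →L[ℂ] H)).sub hQsa).star_eq] at h
  have key2 : (1 - P) * T * (1 - P) ≤ (1 - δ) • (1 - P) := by
    have hconj := star_left_conjugate_le_conjugate key (1 - P)
    rw [hsa1P.star_eq] at hconj
    calc (1 - P) * T * (1 - P) = (1 - P) * (T * (1 - Q)) * (1 - P) := by
          conv_rhs => rw [mul_assoc, mul_assoc, hQ1P, ← mul_assoc]
      _ ≤ (1 - P) * ((1 - δ) • (1 - Q)) * (1 - P) := hconj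
      _ = (1 - δ) • ((1 - P) * (1 - Q) * (1 - P)) := by
          rw [mul_smul_comm, smul_mul_assoc]
      _ = (1 - δ) • (1 - P) := by rw [h1PQ, hP.one_sub.eq]
  -- now assume P' = P and derive a contradiction
  subst heq
  have hT'P : T' * P' = P' := by
    ext ξ
    simp only [ContinuousLinearMap.mul_apply]
    refine (hP'fix _).mp ?_
    have := DFunLike.congr_fun hP'.eq ξ
    simpa [ContinuousLinearMap.mul_apply] using this
  have hPT' : P' * T' = P' := by
    have h := congrArg star hT'P
    rwa [star_mul, hP'sa.star_eq, hT'sa.star_eq] at h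
  have hBdef : T' - P' = (1 - P') * T' * (1 - P') := by
    rw [sub_mul, one_mul, hPT', mul_sub, mul_one, sub_mul, hT'P, hP'.eq]
    abel
  have hBle : T' - P' ≤ (1 - δ) • (1 - P') := by
    rw [hBdef]
    refine le_trans ?_ key2
    have h := star_left_conjugate_le_conjugate hTT' (1 - P')
    rwa [hsa1P.star_eq] at h
  have hBle1 : T' - P' ≤ algebraMap ℝ _ (1 - δ) := by
    rw [Algebra.algebraMap_eq_smul_one]
    refine hBle.trans ?_
    have h2 : (0:H→L[ℂ]H) ≤ (1 - δ) • P' := aux_smul_nonneg P' hP' hP'sa _ (by linarith)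
    calc (1 - δ) • (1 - P' : H→L[ℂ]H) = (1 - δ) • (1:H→L[ℂ]H) - (1 - δ) • P' := by
          rw [smul_sub]
      _ ≤ (1 - δ) • (1:H→L[ℂ]H) := sub_le_self _ h2
  have hnot : t ∉ spectrum ℝ (T' - P') := by
    intro hmem
    have := aux_ub (T' - P') (1 - δ) hBle1 t hmem
    linarith
  obtain ⟨u, hudef⟩ : ∃ u : H→L[ℂ]H, u = algebraMap ℝ (H→L[ℂ]H) t - (T' - P') := ⟨_, rfl⟩
  have hu : IsUnit u := hudef ▸ spectrum.notMem_iff.mp hnot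
  obtain ⟨v, hv⟩ := hu
  obtain ⟨W, hWdef⟩ : ∃ W : H→L[ℂ]H, W = (↑v⁻¹ : H→L[ℂ]H) := ⟨_, rfl⟩
  have hWu : W * u = 1 := by rw [hWdef, ← hv]; exact v.inv_mul
  have huW : u * W = 1 := by rw [hWdef, ← hv]; exact v.mul_inv
  have halg : (algebraMap ℝ (H→L[ℂ]H) t) * P' = t • P' := by
    rw [Algebra.algebraMap_eq_smul_one, smul_mul_assoc, one_mul]
  have halg' : P' * (algebraMap ℝ (H→L[ℂ]H) t) = t • P' := by
    rw [Algebra.algebraMap_eq_smul_one, mul_smul_comm, mul_one]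
  have huP : u * P' = t • P' := by
    rw [hudef, sub_mul, sub_mul, hT'P, hP'.eq, sub_self, sub_zero, halg]
  have hPu : P' * u = t • P' := by
    rw [hudef, mul_sub, mul_sub, hPT', hP'.eq, sub_self, sub_zero, halg']
  have hWP : W * P' = t⁻¹ • P' := by
    have h1' : P' = t • (W * P') := by
      calc P' = (W * u) * P' := by rw [hWu, one_mul]
        _ = W * (u * P') := mul_assoc _ _ _
        _ = W * (t • P') := by rw [huP]
        _ = t • (W * P') := mul_smul_comm _ _ _
    calc W * P' = (t⁻¹ * t) • (W * P') := by rw [inv_mul_cancel₀ ht0.ne', one_smul]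
      _ = t⁻¹ • (t • (W * P')) := mul_smul _ _ _
      _ = t⁻¹ • P' := by rw [← h1']
  have hPW : P' * W = t⁻¹ • P' := by
    have h1' : P' = t • (P' * W) := by
      calc P' = P' * (u * W) := by rw [huW, mul_one]
        _ = (P' * u) * W := (mul_assoc _ _ _).symm
        _ = (t • P') * W := by rw [hPu]
        _ = t • (P' * W) := smul_mul_assoc _ _ _
    calc P' * W = (t⁻¹ * t) • (P' * W) := by rw [inv_mul_cancel₀ ht0.ne', one_smul]
      _ = t⁻¹ • (t • (P' * W)) := mul_smul _ _ _
      _ = t⁻¹ • P' := by rw [← h1']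
  obtain ⟨s, hsdef⟩ : ∃ s : ℝ, s = (t * (t - 1))⁻¹ := ⟨_, rfl⟩
  have hts : t⁻¹ = s * t - s := by
    rw [hsdef]
    have h1t : t - 1 ≠ 0 := sub_ne_zero.mpr ht2.ne
    field_simp
  have hSright : (u - P') * (W + s • P') = 1 := by
    rw [mul_add, sub_mul, sub_mul, huW, mul_smul_comm, mul_smul_comm, huP, hPW, hP'.eq, hts]
    module
  have hSleft : (W + s • P') * (u - P') = 1 := by
    rw [add_mul, mul_sub, mul_sub, hWu, smul_mul_assoc, smul_mul_assoc, hPu, hWP, hP'.eq, hts]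
    module
  have hunit : IsUnit (u - P') := ⟨⟨u - P', W + s • P', hSright, hSleft⟩, rfl⟩
  have hcontra : (t:ℂ) ∉ spectrum ℂ T' := by
    rw [spectrum.notMem_iff]
    have he : algebraMap ℂ (H→L[ℂ]H) ((t:ℝ):ℂ) - T' = u - P' := by
      rw [← Complex.coe_algebraMap, ← IsScalarTower.algebraMap_apply ℝ ℂ (H→L[ℂ]H) t, hudef]
      abel
    rw [he]
    exact hunit
  exact hcontra htmem
end
end

section
/- Let T₁ ≥ T₂ ≥ ⋯ be a non-increasing sequence of positive contractions on a separable Hilbert space H. If 1 is not in the essential spectrum of T_{n₀} for some n₀, then the sequence has uniform spectral gap at 1: there exist δ ∈ (0,1) and N ∈ ℕ with σ(T_n) ∩ (1−δ, 1) = ∅ for all n ≥ N. -/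
open Filter Topology

noncomputable section

local notation "⟪" x ", " y "⟫" => @inner ℂ _ _ x y

variable {H : Type*} [NormedAddCommGroup H] [InnerProductSpace ℂ H] [CompleteSpace H]

set_option linter.unusedSectionVars false
set_option maxHeartbeats 1000000

lemma re_mono {S T : H →L[ℂ] H} (h : S ≤ T) (x : H) :
    (⟪S x, x⟫).re ≤ (⟪T x, x⟫).re := by
  have := ((ContinuousLinearMap.le_def S T).mp h).inner_nonneg_left x
  simp only [ContinuousLinearMap.sub_apply, inner_sub_left, map_sub] at this
  have h2 : (0:ℝ) ≤ (⟪T x, x⟫).re - (⟪S x, x⟫).re := by simpa using (Complex.nonneg_iff.mp this).1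
  linarith

lemma sa_of_nonneg {T : H →L[ℂ] H} (h : 0 ≤ T) : IsSelfAdjoint T :=
  ((ContinuousLinearMap.nonneg_iff_isPositive T).mp h).isSelfAdjoint

lemma norm_le_one' {T : H →L[ℂ] H} (h0 : 0 ≤ T) (h1 : T ≤ 1) : ‖T‖ ≤ 1 :=
  (CStarAlgebra.norm_le_one_iff_of_nonneg T h0).mpr h1

lemma sym_inner {T : H →L[ℂ] H} (h : IsSelfAdjoint T) (x y : H) :
    ⟪T x, y⟫ = ⟪x, T y⟫ :=
  (ContinuousLinearMap.isSelfAdjoint_iff_isSymmetric.mp h) x y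

lemma sq_err_bound {T : H →L[ℂ] H} (hT : ‖T‖ ≤ 1) {x : H} (hx : ‖x‖ = 1) :
    ‖T x - x‖ ^ 2 ≤ 2 - 2 * (⟪T x, x⟫).re := by
  have h1 : ‖T x - x‖ ^ 2 = ‖T x‖ ^ 2 - 2 * RCLike.re ⟪T x, x⟫ + ‖x‖ ^ 2 :=
    @norm_sub_sq ℂ _ _ _ _ (T x) x
  have h2 : ‖T x‖ ≤ 1 := by
    calc ‖T x‖ ≤ ‖T‖ * ‖x‖ := T.le_opNorm x
    _ ≤ 1 := by rw [hx]; simpa using hT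
  have h3 : ‖T x‖ ^ 2 ≤ 1 := by nlinarith [norm_nonneg (T x)]
  have h4 : RCLike.re ⟪T x, x⟫ = (⟪T x, x⟫).re := rfl
  rw [h1, h4, hx]
  nlinarith
lemma approx_eigen {T : H →L[ℂ] H} (hsa : IsSelfAdjoint T) {t : ℝ}
    (ht : (t : ℂ) ∈ spectrum ℂ T) {ε : ℝ} (hε : 0 < ε) :
    ∃ x : H, ‖x‖ = 1 ∧ ‖T x - (t : ℂ) • x‖ < ε := by
  by_contra hcon
  push_neg at hcon
  set A : H →L[ℂ] H := algebraMap ℂ (H →L[ℂ] H) (t : ℂ) - T with hA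
  have hAx : ∀ z : H, A z = (t : ℂ) • z - T z := by
    intro z
    simp [hA, Algebra.algebraMap_eq_smul_one, ContinuousLinearMap.sub_apply]
  have hAsa : IsSelfAdjoint A := by
    rw [hA, Algebra.algebraMap_eq_smul_one]
    refine IsSelfAdjoint.sub ?_ hsa
    rw [IsSelfAdjoint, star_smul, Complex.star_def, Complex.conj_ofReal]
    simp [star_one]
  -- lower bound
  have hlow : ∀ z : H, ε * ‖z‖ ≤ ‖A z‖ := by
    intro z
    rcases eq_or_ne z 0 with rfl | hz
    · simp
    · have hn : (0:ℝ) < ‖z‖ := norm_pos_iff.mpr hz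
      set c : ℂ := ((‖z‖ : ℂ))⁻¹ with hc
      have hcn : ‖c‖ = ‖z‖⁻¹ := by
        rw [hc, norm_inv, Complex.norm_real, norm_norm]
      have h1 : ‖(c • z : H)‖ = 1 := by
        rw [norm_smul, hcn, inv_mul_cancel₀ hn.ne']
      have h2 := hcon _ h1
      have h3 : T (c • z) - (t : ℂ) • (c • z) = c • (T z - (t : ℂ) • z) := by
        rw [map_smul, smul_sub, smul_comm]
      rw [h3, norm_smul, hcn] at h2
      have h4 : ε * ‖z‖ ≤ ‖T z - (t : ℂ) • z‖ := by
        rw [inv_mul_eq_div, le_div_iff₀ hn] at h2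
        exact h2
      rw [hAx, norm_sub_rev]
      exact h4
  have hanti : AntilipschitzWith (⟨ε, hε.le⟩ : NNReal)⁻¹ A := by
    apply ContinuousLinearMap.antilipschitz_of_bound
    intro z
    have hk : ‖z‖ ≤ ε⁻¹ * ‖A z‖ := by
      rw [inv_mul_eq_div, le_div_iff₀ hε, mul_comm]
      exact hlow z
    exact hk
  have hbij : Function.Bijective A := by
    rw [ContinuousLinearMap.bijective_iff_dense_range_and_antilipschitz]
    refine ⟨?_, ⟨_, hanti⟩⟩
    rw [Submodule.topologicalClosure_eq_top_iff, Submodule.eq_bot_iff]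
    intro y hy
    have h1 : ⟪A (A y), y⟫ = 0 := hy _ ⟨A y, rfl⟩
    have h2 : ⟪A y, A y⟫ = 0 := by
      rw [sym_inner hAsa (A y) y] at h1
      exact h1
    have hAy : A y = 0 := inner_self_eq_zero.mp h2
    have h5 := hlow y
    rw [hAy, norm_zero] at h5
    have : ‖y‖ ≤ 0 := by nlinarith [norm_nonneg y]
    exact norm_le_zero_iff.mp this
  exact (spectrum.mem_iff.mp ht) (ContinuousLinearMap.isUnit_iff_bijective.mpr hbij)

lemma weak_subseq [TopologicalSpace.SeparableSpace H] (x : ℕ → H) (hx : ∀ k, ‖x k‖ ≤ 1) :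
    ∃ (φ : ℕ → ℕ) (v : H), StrictMono φ ∧
      ∀ y : H, Tendsto (fun k => ⟪x (φ k), y⟫) atTop (𝓝 ⟪v, y⟫) := by
  have : Nonempty H := ⟨0⟩
  obtain ⟨d, hd⟩ := TopologicalSpace.exists_dense_seq H
  set u : ℕ → ℕ → ℂ := fun k i => ⟪x k, d i⟫ with hu
  have hs : IsCompact (Set.univ.pi fun i => Metric.closedBall (0:ℂ) (‖d i‖)) :=
    isCompact_univ_pi fun i => isCompact_closedBall 0 _
  have hmem : ∀ k, u k ∈ Set.univ.pi fun i => Metric.closedBall (0:ℂ) (‖d i‖) := by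
    intro k
    rw [Set.mem_univ_pi]
    intro i
    rw [Metric.mem_closedBall, dist_zero_right]
    calc ‖(⟪x k, d i⟫ : ℂ)‖ ≤ ‖x k‖ * ‖d i‖ := norm_inner_le_norm _ _
    _ ≤ 1 * ‖d i‖ := by
        apply mul_le_mul_of_nonneg_right (hx k) (norm_nonneg _)
    _ = ‖d i‖ := one_mul _
  obtain ⟨c, -, φ, hφ, hconv⟩ := hs.tendsto_subseq hmem
  have hpt : ∀ i, Tendsto (fun k => ⟪x (φ k), d i⟫) atTop (𝓝 (c i)) := by
    rw [tendsto_pi_nhds] at hconv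
    exact fun i => hconv i
  have hcauchy : ∀ y : H, CauchySeq (fun k => ⟪x (φ k), y⟫) := by
    intro y
    rw [Metric.cauchySeq_iff']
    intro ε hε
    obtain ⟨i, hi⟩ := Metric.denseRange_iff.mp hd y (ε/4) (by linarith)
    have hb : CauchySeq (fun k => ⟪x (φ k), d i⟫) := (hpt i).cauchySeq
    obtain ⟨N, hN⟩ := Metric.cauchySeq_iff'.mp hb (ε/4) (by linarith)
    refine ⟨N, fun n hn => ?_⟩
    have key : ∀ m : ℕ, dist (⟪x (φ m), y⟫ : ℂ) ⟪x (φ m), d i⟫ < ε / 4 := by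
      intro m
      rw [dist_eq_norm, ← inner_sub_right]
      calc ‖(⟪x (φ m), y - d i⟫ : ℂ)‖ ≤ ‖x (φ m)‖ * ‖y - d i‖ := norm_inner_le_norm _ _
      _ ≤ 1 * ‖y - d i‖ := mul_le_mul_of_nonneg_right (hx _) (norm_nonneg _)
      _ = dist y (d i) := by rw [one_mul, dist_eq_norm]
      _ < ε / 4 := hi
    calc dist (⟪x (φ n), y⟫ : ℂ) ⟪x (φ N), y⟫
        ≤ dist (⟪x (φ n), y⟫ : ℂ) ⟪x (φ n), d i⟫ +
          dist (⟪x (φ n), d i⟫ : ℂ) ⟪x (φ N), d i⟫ +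
          dist (⟪x (φ N), d i⟫ : ℂ) ⟪x (φ N), y⟫ := dist_triangle4 _ _ _ _
    _ < ε/4 + ε/4 + ε/4 := by
        have := hN n hn
        have h2 := key n
        have h3 := (key N)
        rw [dist_comm] at h3
        exact add_lt_add (add_lt_add h2 this) h3
    _ < ε := by linarith
  have hlim : ∀ y : H, ∃ L : ℂ, Tendsto (fun k => ⟪x (φ k), y⟫) atTop (𝓝 L) :=
    fun y => cauchySeq_tendsto_of_complete (hcauchy y)
  set L : H → ℂ := fun y => (hlim y).choose with hLdef
  have hL : ∀ y, Tendsto (fun k => ⟪x (φ k), y⟫) atTop (𝓝 (L y)) :=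
    fun y => (hlim y).choose_spec
  have hadd : ∀ y z : H, L (y + z) = L y + L z := by
    intro y z
    refine tendsto_nhds_unique (hL (y+z)) ?_
    exact ((hL y).add (hL z)).congr (fun k => (inner_add_right _ _ _).symm)
  have hsmul : ∀ (a : ℂ) (y : H), L (a • y) = a • L y := by
    intro a y
    refine tendsto_nhds_unique (hL (a • y)) ?_
    have h2 := ((hL y).const_mul a).congr (fun k => (inner_smul_right (x (φ k)) y a).symm)
    rw [smul_eq_mul]
    exact h2
  have hbound : ∀ y, ‖L y‖ ≤ ‖y‖ := by
    intro y
    refine le_of_tendsto (hL y).norm (Eventually.of_forall fun k => ?_)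
    calc ‖(⟪x (φ k), y⟫ : ℂ)‖ ≤ ‖x (φ k)‖ * ‖y‖ := norm_inner_le_norm _ _
    _ ≤ 1 * ‖y‖ := mul_le_mul_of_nonneg_right (hx _) (norm_nonneg _)
    _ = ‖y‖ := one_mul _
  set ℓ : H →L[ℂ] ℂ := LinearMap.mkContinuous
    { toFun := L, map_add' := hadd, map_smul' := hsmul } 1
    (fun y => by simpa using hbound y) with hldef
  set v : H := (InnerProductSpace.toDual ℂ H).symm ℓ with hv
  refine ⟨φ, v, hφ, fun y => ?_⟩
  have : ⟪v, y⟫ = L y := by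
    rw [hv, InnerProductSpace.toDual_symm_apply]
    rfl
  rw [this]
  exact hL y
lemma step_exists (A : H →L[ℂ] H) (hA : ‖A‖ ≤ 1) (x : ℕ → H)
    (hx1 : ∀ k, ‖x k‖ = 1)
    (hxA : Tendsto (fun k => ‖A (x k) - x k‖) atTop (𝓝 0))
    (hxw : ∀ y : H, Tendsto (fun k => ⟪x k, y⟫) atTop (𝓝 0))
    (n : ℕ) (f : Fin n → H) (hf : Orthonormal ℂ f) :
    ∃ z : H, ‖z‖ = 1 ∧ (∀ i, ⟪f i, z⟫ = 0) ∧ ‖A z - z‖ ≤ 1/((n:ℝ)+1) := by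
  set m : ℝ := (n : ℝ) with hm
  have hm0 : 0 ≤ m := Nat.cast_nonneg n
  set γ : ℝ := 1/(4*(m+1)^2) with hγdef
  have hγ : 0 < γ := by positivity
  have h1 : ∀ᶠ k in atTop, ‖A (x k) - x k‖ < γ := hxA.eventually_lt_const hγ
  have h2 : ∀ᶠ k in atTop, ∀ i : Fin n, ‖(⟪x k, f i⟫ : ℂ)‖ < γ := by
    rw [eventually_all]
    intro i
    have := (hxw (f i)).norm
    rw [norm_zero] at this
    exact this.eventually_lt_const hγ
  obtain ⟨k, hk2, hk1⟩ := (h2.and h1).exists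
  set a : Fin n → ℂ := fun i => ⟪f i, x k⟫ with ha
  have hanorm : ∀ i, ‖a i‖ < γ := by
    intro i
    rw [ha]
    rw [norm_inner_symm]
    exact hk2 i
  set w : H := x k - ∑ i, a i • f i with hw
  have hw_inner : ∀ j, ⟪f j, w⟫ = 0 := by
    intro j
    rw [hw, inner_sub_right, hf.inner_right_fintype a j]
    simp [ha]
  have hsum : ‖∑ i, a i • f i‖ ≤ m * γ := by
    calc ‖∑ i, a i • f i‖ ≤ ∑ i, ‖a i • f i‖ := norm_sum_le _ _
    _ ≤ ∑ _i : Fin n, γ := by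
        apply Finset.sum_le_sum
        intro i _
        rw [norm_smul, hf.1 i, mul_one]
        exact (hanorm i).le
    _ = m * γ := by simp [hm, mul_comm]
  have hmγ : m * γ ≤ 1/4 := by
    rw [hγdef, mul_one_div, div_le_div_iff₀ (by positivity) (by norm_num)]
    nlinarith
  have hwn : 3/4 ≤ ‖w‖ := by
    have := norm_sub_norm_le (x k) (∑ i, a i • f i)
    rw [hx1 k] at this
    rw [hw]
    linarith
  have hw0 : w ≠ 0 := by
    intro h
    rw [h, norm_zero] at hwn
    linarith
  have herr : ‖A w - w‖ ≤ γ + m * γ * 2 := by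
    have hrw : A w - w = (A (x k) - x k) - ∑ i, a i • (A (f i) - f i) := by
      rw [hw, map_sub, map_sum]
      simp only [map_smul, smul_sub]
      rw [Finset.sum_sub_distrib]
      abel
    rw [hrw]
    calc ‖(A (x k) - x k) - ∑ i, a i • (A (f i) - f i)‖
        ≤ ‖A (x k) - x k‖ + ‖∑ i, a i • (A (f i) - f i)‖ := norm_sub_le _ _
    _ ≤ γ + ∑ _i : Fin n, γ * 2 := by
        apply add_le_add hk1.le
        calc ‖∑ i, a i • (A (f i) - f i)‖ ≤ ∑ i, ‖a i • (A (f i) - f i)‖ := norm_sum_le _ _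
        _ ≤ ∑ _i : Fin n, γ * 2 := by
            apply Finset.sum_le_sum
            intro i _
            rw [norm_smul]
            apply mul_le_mul (hanorm i).le _ (norm_nonneg _) hγ.le
            calc ‖A (f i) - f i‖ ≤ ‖A (f i)‖ + ‖f i‖ := norm_sub_le _ _
            _ ≤ ‖A‖ * ‖f i‖ + ‖f i‖ := by
                exact add_le_add (A.le_opNorm _) le_rfl
            _ ≤ 2 := by rw [hf.1 i, mul_one]; linarith
    _ = γ + m * γ * 2 := by simp [hm]; ring
  refine ⟨((‖w‖ : ℂ))⁻¹ • w, ?_, ?_, ?_⟩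
  · rw [norm_smul, norm_inv, Complex.norm_real, norm_norm, inv_mul_cancel₀ (by linarith)]
  · intro i
    rw [inner_smul_right, hw_inner i, mul_zero]
  · have hAz : A (((‖w‖ : ℂ))⁻¹ • w) - ((‖w‖ : ℂ))⁻¹ • w = ((‖w‖ : ℂ))⁻¹ • (A w - w) := by
      rw [map_smul, ← smul_sub]
    rw [hAz, norm_smul, norm_inv, Complex.norm_real, norm_norm]
    have hinv : ‖w‖⁻¹ ≤ 4/3 := by
      rw [inv_le_comm₀ (by linarith) (by norm_num)]
      linarith
    calc ‖w‖⁻¹ * ‖A w - w‖ ≤ (4/3) * (γ + m * γ * 2) := by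
          apply mul_le_mul hinv herr (norm_nonneg _) (by norm_num)
    _ ≤ 1/(m+1) := by
        have h9 : γ + m*γ*2 = (1+2*m)/(4*(m+1)^2) := by
          rw [hγdef]; field_simp
        rw [h9, ← mul_div_assoc, div_le_div_iff₀ (by positivity) (by positivity)]
        nlinarith
    _ = 1/((n:ℝ)+1) := by rw [hm]
private def chain (F : ∀ n, (Fin n → H) → H) : (n : ℕ) → Fin n → H
  | 0 => Fin.elim0
  | n+1 => Fin.snoc (chain F n) (F n (chain F n))

lemma build_orthonormal (A : H →L[ℂ] H) (hA : ‖A‖ ≤ 1) (x : ℕ → H)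
    (hx1 : ∀ k, ‖x k‖ = 1)
    (hxA : Tendsto (fun k => ‖A (x k) - x k‖) atTop (𝓝 0))
    (hxw : ∀ y : H, Tendsto (fun k => ⟪x k, y⟫) atTop (𝓝 0)) :
    ∃ ξ : ℕ → H, Orthonormal ℂ ξ ∧ Tendsto (fun n => ‖A (ξ n) - ξ n‖) atTop (𝓝 0) := by
  have hstep : ∀ n (f : Fin n → H), ∃ z : H, Orthonormal ℂ f →
      (‖z‖ = 1 ∧ (∀ i, ⟪f i, z⟫ = 0) ∧ ‖A z - z‖ ≤ 1/((n:ℝ)+1)) := by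
    intro n f
    by_cases hf : Orthonormal ℂ f
    · obtain ⟨z, h⟩ := step_exists A hA x hx1 hxA hxw n f hf
      exact ⟨z, fun _ => h⟩
    · exact ⟨0, fun h => absurd h hf⟩
  choose F hF using hstep
  have hchain_succ : ∀ n, chain F (n+1) = Fin.snoc (chain F n) (F n (chain F n)) := by
    intro n; rfl
  have horth : ∀ n, Orthonormal ℂ (chain F n) := by
    intro n
    induction n with
    | zero => exact ⟨fun i => i.elim0, fun i j _ => i.elim0⟩
    | succ n ih =>
      rw [hchain_succ]
      obtain ⟨hz1, hz2, hz3⟩ := hF n (chain F n) ih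
      constructor
      · intro i
        refine Fin.lastCases ?_ ?_ i
        · rw [Fin.snoc_last]; exact hz1
        · intro j; rw [Fin.snoc_castSucc]; exact ih.1 j
      · intro i j hij
        induction i using Fin.lastCases with
        | last =>
          induction j using Fin.lastCases with
          | last => exact absurd rfl hij
          | cast j =>
            rw [Fin.snoc_last, Fin.snoc_castSucc, ← inner_conj_symm, hz2 j, map_zero]
        | cast i =>
          induction j using Fin.lastCases with
          | last => rw [Fin.snoc_castSucc, Fin.snoc_last]; exact hz2 i
          | cast j =>
            rw [Fin.snoc_castSucc, Fin.snoc_castSucc]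
            exact ih.2 (fun h => hij (by rw [h]))
  have hcompat : ∀ (N : ℕ) (i : Fin N), chain F N i = chain F ((i:ℕ)+1) (Fin.last (i:ℕ)) := by
    intro N
    induction N with
    | zero => exact fun i => i.elim0
    | succ N ih =>
      intro i
      induction i using Fin.lastCases with
      | last => rfl
      | cast i =>
        rw [hchain_succ, Fin.snoc_castSucc, ih i]
        simp
  have hlast : ∀ n, chain F (n+1) (Fin.last n) = F n (chain F n) := by
    intro n; rw [hchain_succ, Fin.snoc_last]
  refine ⟨fun n => chain F (n+1) (Fin.last n), ⟨?_, ?_⟩, ?_⟩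
  · intro n
    exact (horth (n+1)).1 (Fin.last n)
  · intro i j hij
    have hi : i < max i j + 1 := by omega
    have hj : j < max i j + 1 := by omega
    have h1 := hcompat (max i j + 1) ⟨i, hi⟩
    have h2 := hcompat (max i j + 1) ⟨j, hj⟩
    simp only at h1 h2
    show (⟪chain F (i+1) (Fin.last i), chain F (j+1) (Fin.last j)⟫ : ℂ) = 0
    rw [← h1, ← h2]
    exact (horth (max i j + 1)).2 (by simp [Fin.ext_iff, hij])
  · have hbound : ∀ n : ℕ, ‖A (chain F (n+1) (Fin.last n)) - chain F (n+1) (Fin.last n)‖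
        ≤ 1/((n:ℝ)+1) := by
      intro n
      rw [hlast]
      exact (hF n (chain F n) (horth n)).2.2
    exact squeeze_zero (fun n => norm_nonneg _) hbound tendsto_one_div_add_atTop_nhds_zero_nat

theorem stmt16 [TopologicalSpace.SeparableSpace H]
    (T : ℕ → H →L[ℂ] H) (hpos : ∀ n, 0 ≤ T n) (hcontr : ∀ n, T n ≤ 1)
    (hmono : ∀ n, T (n + 1) ≤ T n) (n₀ : ℕ)
    (hess : ¬ ∃ ξ : ℕ → H, Orthonormal ℂ ξ ∧
      Tendsto (fun n => ‖T n₀ (ξ n) - ξ n‖) atTop (nhds 0)) :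
    ∃ δ : ℝ, 0 < δ ∧ δ < 1 ∧ ∃ N : ℕ, ∀ n ≥ N, ∀ t : ℝ, 1 - δ < t → t < 1 →
      (t : ℂ) ∉ spectrum ℂ (T n) := by
  by_contra hcon
  push_neg at hcon
  have hsa : ∀ m, IsSelfAdjoint (T m) := fun m => sa_of_nonneg (hpos m)
  have hnorm : ∀ m, ‖T m‖ ≤ 1 := fun m => norm_le_one' (hpos m) (hcontr m)
  have hmono' : ∀ a b : ℕ, a ≤ b → T b ≤ T a := by
    intro a b hab
    induction b, hab using Nat.le_induction with
    | base => exact le_rfl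
    | succ n hn ih => exact (hmono n).trans ih
  have hsel : ∀ k : ℕ, ∃ n, n ≥ max n₀ k ∧ ∃ s : ℝ,
      1 - 1/((k:ℝ)+2) < s ∧ s < 1 ∧ (s:ℂ) ∈ spectrum ℂ (T n) := by
    intro k
    have hδ1 : (0:ℝ) < 1/((k:ℝ)+2) := by positivity
    have hδ2 : 1/((k:ℝ)+2) < 1 := by
      rw [div_lt_one (by positivity)]
      have : (0:ℝ) ≤ (k:ℝ) := Nat.cast_nonneg k
      linarith
    exact hcon (1/((k:ℝ)+2)) hδ1 hδ2 (max n₀ k)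
  choose nk hnk t ht1 ht2 hts using hsel
  have htpos : ∀ k, 0 < 1 - t k := fun k => by linarith [ht2 k]
  have hhalf : ∀ k : ℕ, 1/((k:ℝ)+2) ≤ 1/2 := by
    intro k
    apply one_div_le_one_div_of_le (by norm_num)
    have : (0:ℝ) ≤ (k:ℝ) := Nat.cast_nonneg k
    linarith
  have htk0 : ∀ k, 0 < t k := by
    intro k
    have := ht1 k
    have := hhalf k
    linarith
  have hεpos : ∀ k : ℕ, 0 < (1 - t k)/((k:ℝ)+1) :=
    fun k => div_pos (htpos k) (by positivity)
  have hx : ∀ k : ℕ, ∃ x : H, ‖x‖ = 1 ∧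
      ‖T (nk k) x - (t k : ℂ) • x‖ < (1 - t k)/((k:ℝ)+1) :=
    fun k => approx_eigen (hsa _) (hts k) (hεpos k)
  choose x hx1 hx2 using hx
  -- Fact A
  have factA : ∀ m k : ℕ, m ≤ nk k →
      t k - (1 - t k)/((k:ℝ)+1) ≤ (⟪T m (x k), x k⟫).re := by
    intro m k hmk
    have h1 := re_mono (hmono' m (nk k) hmk) (x k)
    have e1 : (⟪T (nk k) (x k), x k⟫ : ℂ)
        = ⟪T (nk k) (x k) - (t k : ℂ) • x k, x k⟫ + ⟪(t k : ℂ) • x k, x k⟫ := by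
      rw [← inner_add_left, sub_add_cancel]
    have e2 : (⟪(t k : ℂ) • x k, x k⟫ : ℂ) = (t k : ℂ) := by
      rw [inner_smul_left, Complex.conj_ofReal, inner_self_eq_norm_sq_to_K, hx1 k]
      norm_num
    have e3 : |(⟪T (nk k) (x k) - (t k : ℂ) • x k, x k⟫ : ℂ).re| ≤ (1 - t k)/((k:ℝ)+1) := by
      have h4 : |(⟪T (nk k) (x k) - (t k : ℂ) • x k, x k⟫ : ℂ).re|
          ≤ ‖(⟪T (nk k) (x k) - (t k : ℂ) • x k, x k⟫ : ℂ)‖ := Complex.abs_re_le_norm _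
      have h5 : ‖(⟪T (nk k) (x k) - (t k : ℂ) • x k, x k⟫ : ℂ)‖
          ≤ ‖T (nk k) (x k) - (t k : ℂ) • x k‖ * ‖x k‖ := norm_inner_le_norm _ _
      rw [hx1 k, mul_one] at h5
      linarith [hx2 k]
    have e4 : (⟪T (nk k) (x k), x k⟫ : ℂ).re
        = (⟪T (nk k) (x k) - (t k : ℂ) • x k, x k⟫ : ℂ).re + t k := by
      rw [e1, Complex.add_re, e2, Complex.ofReal_re]
    have := abs_le.mp e3
    linarith
  -- Fact B
  have factB : ∀ m : ℕ, Tendsto (fun k => ‖T m (x k) - x k‖) atTop (𝓝 0) := by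
    intro m
    have t1 : Tendsto (fun k : ℕ => 1/((k:ℝ)+1)) atTop (𝓝 0) :=
      tendsto_one_div_add_atTop_nhds_zero_nat
    have hb : Tendsto (fun k : ℕ => Real.sqrt (4*(1/((k:ℝ)+1)))) atTop (𝓝 0) := by
      have h0 : Tendsto (fun k : ℕ => 4*(1/((k:ℝ)+1))) atTop (𝓝 0) := by
        have := t1.const_mul (4:ℝ)
        simpa using this
      have hc : Tendsto Real.sqrt (𝓝 0) (𝓝 0) := by
        have := Real.continuous_sqrt.tendsto 0
        simpa using this
      exact hc.comp h0
    apply squeeze_zero' (Eventually.of_forall fun k => norm_nonneg _) _ hb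
    filter_upwards [eventually_ge_atTop m] with k hk
    have hmk : m ≤ nk k := le_trans (le_trans hk (le_max_right n₀ k)) (hnk k)
    have h1 := factA m k hmk
    have h2 := sq_err_bound (hnorm m) (hx1 k)
    apply Real.le_sqrt_of_sq_le
    have h3 : 1 - t k < 1/((k:ℝ)+2) := by linarith [ht1 k]
    have h4 : (1 - t k)/((k:ℝ)+1) ≤ 1/((k:ℝ)+1) := by
      gcongr
      linarith [htk0 k]
    have h5 : (1:ℝ)/((k:ℝ)+2) ≤ 1/((k:ℝ)+1) := by
      apply one_div_le_one_div_of_le (by positivity)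
      linarith
    nlinarith
  -- weak subsequence
  obtain ⟨φ, v, hφ, hweak⟩ := weak_subseq x (fun k => (hx1 k).le)
  have hfix : ∀ m, T m v = v := by
    intro m
    have key : ∀ y : H, (⟪v, T m y⟫ : ℂ) = ⟪v, y⟫ := by
      intro y
      have l1 : Tendsto (fun j => (⟪x (φ j), T m y⟫ : ℂ)) atTop (𝓝 ⟪v, T m y⟫) := hweak _
      have l3 : Tendsto (fun j => (⟪T m (x (φ j)) - x (φ j), y⟫ : ℂ)) atTop (𝓝 0) := by
        rw [tendsto_zero_iff_norm_tendsto_zero]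
        apply squeeze_zero (fun j => norm_nonneg _) (fun j => norm_inner_le_norm _ _)
        have := ((factB m).comp hφ.tendsto_atTop).mul_const ‖y‖
        simpa using this
      have l2 : Tendsto (fun j => (⟪x (φ j), T m y⟫ : ℂ)) atTop (𝓝 ⟪v, y⟫) := by
        have e : ∀ j, (⟪x (φ j), T m y⟫ : ℂ)
            = ⟪x (φ j), y⟫ + ⟪T m (x (φ j)) - x (φ j), y⟫ := by
          intro j
          rw [← sym_inner (hsa m), inner_sub_left]
          ring
        have h6 := (hweak y).add l3
        rw [add_zero] at h6
        exact h6.congr (fun j => (e j).symm)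
      exact tendsto_nhds_unique l1 l2
    have h0 : ∀ y : H, (⟪T m v - v, y⟫ : ℂ) = 0 := by
      intro y
      rw [inner_sub_left, sym_inner (hsa m), key, sub_self]
    have h7 := h0 (T m v - v)
    rw [inner_self_eq_zero] at h7
    exact sub_eq_zero.mp h7
  have hv0 : v = 0 := by
    have hb : ∀ j : ℕ, ‖(⟪x (φ j), v⟫ : ℂ)‖ ≤ ‖v‖ * (1/((j:ℝ)+1)) := by
      intro j
      set k := φ j with hk
      have hfixk : T (nk k) v = v := hfix _
      have e1 : (⟪x k, v⟫ : ℂ) - (t k : ℂ) * ⟪x k, v⟫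
          = ⟪T (nk k) (x k) - (t k : ℂ) • x k, v⟫ := by
        rw [inner_sub_left, inner_smul_left, Complex.conj_ofReal]
        congr 1
        rw [sym_inner (hsa _), hfixk]
      have e2 : ‖((1:ℂ) - (t k : ℂ)) * ⟪x k, v⟫‖ ≤ ((1 - t k)/((k:ℝ)+1)) * ‖v‖ := by
        have e2a : ((1:ℂ) - (t k : ℂ)) * ⟪x k, v⟫ = ⟪x k, v⟫ - (t k : ℂ) * ⟪x k, v⟫ := by
          ring
        rw [e2a, e1]
        calc ‖(⟪T (nk k) (x k) - (t k : ℂ) • x k, v⟫ : ℂ)‖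
            ≤ ‖T (nk k) (x k) - (t k : ℂ) • x k‖ * ‖v‖ := norm_inner_le_norm _ _
        _ ≤ ((1 - t k)/((k:ℝ)+1)) * ‖v‖ :=
            mul_le_mul_of_nonneg_right (hx2 k).le (norm_nonneg v)
      rw [norm_mul] at e2
      have e3 : ‖(1:ℂ) - (t k : ℂ)‖ = 1 - t k := by
        rw [← Complex.ofReal_one, ← Complex.ofReal_sub, Complex.norm_real]
        exact abs_of_pos (htpos k)
      rw [e3] at e2
      have e4 : ‖(⟪x k, v⟫ : ℂ)‖ ≤ ‖v‖ * (1/((k:ℝ)+1)) := by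
        have hp := htpos k
        have e2b : (1 - t k) * ‖(⟪x k, v⟫ : ℂ)‖ ≤ (1 - t k) * (‖v‖ * (1/((k:ℝ)+1))) := by
          calc (1 - t k) * ‖(⟪x k, v⟫ : ℂ)‖ ≤ ((1 - t k)/((k:ℝ)+1)) * ‖v‖ := e2
          _ = (1 - t k) * (‖v‖ * (1/((k:ℝ)+1))) := by ring
        exact le_of_mul_le_mul_left e2b hp
      have e5 : (1:ℝ)/((k:ℝ)+1) ≤ 1/((j:ℝ)+1) := by
        apply one_div_le_one_div_of_le (by positivity)
        have : (j:ℝ) ≤ (k:ℝ) := by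
          exact_mod_cast hφ.le_apply
        linarith
      exact e4.trans (mul_le_mul_of_nonneg_left e5 (norm_nonneg v))
    have l1 : Tendsto (fun j => (⟪x (φ j), v⟫ : ℂ)) atTop (𝓝 ⟪v, v⟫) := hweak v
    have l2 : Tendsto (fun j => (⟪x (φ j), v⟫ : ℂ)) atTop (𝓝 0) := by
      rw [tendsto_zero_iff_norm_tendsto_zero]
      apply squeeze_zero (fun j => norm_nonneg _) hb
      have := tendsto_one_div_add_atTop_nhds_zero_nat.const_mul ‖v‖
      simpa using this
    have h8 : (⟪v, v⟫ : ℂ) = 0 := tendsto_nhds_unique l1 l2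
    exact inner_self_eq_zero.mp h8
  have hxw' : ∀ y : H, Tendsto (fun j => (⟪x (φ j), y⟫ : ℂ)) atTop (𝓝 0) := by
    intro y
    have h9 := hweak y
    rw [hv0] at h9
    simpa using h9
  have hxA' : Tendsto (fun j => ‖T n₀ (x (φ j)) - x (φ j)‖) atTop (𝓝 0) :=
    (factB n₀).comp hφ.tendsto_atTop
  obtain ⟨ξ, hξ1, hξ2⟩ := build_orthonormal (T n₀) (hnorm n₀) (fun j => x (φ j))
    (fun j => hx1 _) hxA' (fun y => hxw' y)
  exact hess ⟨ξ, hξ1, hξ2⟩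
end
end

section
/- There exists a sequence (ξ_n) of unit vectors in an infinite-dimensional separable Hilbert space H such that (i) ξ_n → 0 weakly, (ii) (‖ξ_n‖) is non-increasing, (iii) for every k, ‖ξ_{n+k} − ξ_n‖ → 0 as n → ∞, but the set {ξ_n : n ∈ ℕ} is not totally bounded. -/
open Filter Topology

noncomputable section

local notation "⟪" x ", " y "⟫" => @inner ℂ _ _ x y

variable {H : Type*} [NormedAddCommGroup H] [InnerProductSpace ℂ H] [CompleteSpace H]

private lemma cos_lip (x y : ℝ) : |Real.cos x - Real.cos y| ≤ |x - y| := by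
  rw [Real.cos_sub_cos]
  rw [abs_mul, abs_mul, abs_neg, abs_two]
  have h1 : |Real.sin ((x+y)/2)| ≤ 1 := Real.abs_sin_le_one ((x+y)/2)
  have h2 : |Real.sin ((x-y)/2)| ≤ |(x-y)/2| := Real.abs_sin_le_abs
  have h3 : |(x-y)/2| = |x-y|/2 := by rw [abs_div, abs_two]
  nlinarith [abs_nonneg (Real.sin ((x-y)/2)), abs_nonneg (x-y)]

private lemma sin_lip (x y : ℝ) : |Real.sin x - Real.sin y| ≤ |x - y| := by
  rw [Real.sin_sub_sin]
  rw [abs_mul, abs_mul, abs_two]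
  have h1 : |Real.cos ((x+y)/2)| ≤ 1 := Real.abs_cos_le_one ((x+y)/2)
  have h2 : |Real.sin ((x-y)/2)| ≤ |(x-y)/2| := Real.abs_sin_le_abs
  have h3 : |(x-y)/2| = |x-y|/2 := by rw [abs_div, abs_two]
  nlinarith [abs_nonneg (Real.sin ((x-y)/2)), abs_nonneg (x-y)]

private lemma le_of_sq_le_sq3 {A B : ℝ} (hA : 0 ≤ A) (hB : 0 ≤ B) (h : A^2 ≤ B^2) : A ≤ B := by
  nlinarith

omit [CompleteSpace H] in
private lemma rinner_left (r : ℝ) (u v : H) : ⟪r • u, v⟫ = (r:ℂ) * ⟪u, v⟫ := by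
  rw [← algebraMap_smul ℂ r u, inner_smul_left]
  simp [Complex.coe_algebraMap, Complex.conj_ofReal]

omit [CompleteSpace H] in
private lemma rinner_right (r : ℝ) (u v : H) : ⟪u, r • v⟫ = (r:ℂ) * ⟪u, v⟫ := by
  rw [← algebraMap_smul ℂ r v, inner_smul_right]
  simp [Complex.coe_algebraMap]

omit [CompleteSpace H] in
private lemma norm_sq_two {e : ℕ → H} (he : Orthonormal ℂ e) {i j : ℕ} (h : i ≠ j) (x y : ℝ) :
    ‖(x:ℂ) • e i + (y:ℂ) • e j‖^2 = x^2 + y^2 := by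
  rw [norm_add_sq (𝕜 := ℂ)]
  simp [rinner_left, rinner_right, he.2 h, norm_smul, he.1, sq_abs]

omit [CompleteSpace H] in
private lemma norm_sq_three {e : ℕ → H} (he : Orthonormal ℂ e) {i j k : ℕ} (hij : i ≠ j)
    (hik : i ≠ k) (hjk : j ≠ k) (x y z : ℝ) :
    ‖(x:ℂ) • e i + (y:ℂ) • e j + (z:ℂ) • e k‖^2 = x^2 + y^2 + z^2 := by
  rw [norm_add_sq (𝕜 := ℂ), norm_sq_two he hij]
  simp [inner_add_left, rinner_left, rinner_right, he.2 hik, he.2 hjk, norm_smul, he.1, sq_abs]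

/-- The angle of the `m`-th vector within its segment. -/
def ang (m : ℕ) : ℝ := Real.pi/2 * (Real.sqrt m - Nat.sqrt m)

/-- The rotating sequence of unit vectors. -/
def xi (e : ℕ → H) (m : ℕ) : H :=
  ((Real.cos (ang m) : ℝ) : ℂ) • e (Nat.sqrt m) + ((Real.sin (ang m) : ℝ) : ℂ) • e (Nat.sqrt m + 1)

omit [CompleteSpace H] in
private lemma xi_norm {e : ℕ → H} (he : Orthonormal ℂ e) (m : ℕ) : ‖xi e m‖ = 1 := by
  have h := norm_sq_two he (show Nat.sqrt m ≠ Nat.sqrt m + 1 by omega)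
      (Real.cos (ang m)) (Real.sin (ang m))
  have h2 : ‖xi e m‖^2 = 1 := by
    rw [xi, h, ← Real.sin_sq_add_cos_sq (ang m)]; ring
  nlinarith [norm_nonneg (xi e m)]

omit [CompleteSpace H] in
private lemma xi_sq (e : ℕ → H) (n : ℕ) : xi e (n^2) = e n := by
  have h1 : Nat.sqrt (n^2) = n := Nat.sqrt_eq' n
  have h2 : ang (n^2) = 0 := by
    rw [ang, h1]
    have : Real.sqrt ((n^2 : ℕ) : ℝ) = (n : ℝ) := by
      push_cast
      exact Real.sqrt_sq (Nat.cast_nonneg n)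
    rw [this]; ring
  simp [xi, h1, h2]

omit [CompleteSpace H] in
set_option maxHeartbeats 1000000 in
private lemma xi_step {e : ℕ → H} (he : Orthonormal ℂ e) (m : ℕ) :
    ‖xi e (m+1) - xi e m‖ ≤ Real.pi * (Real.sqrt (m+1) - Real.sqrt m) := by
  have hpi := Real.pi_pos
  have hmono : Real.sqrt m ≤ Real.sqrt ((m+1 : ℕ)) := by
    apply Real.sqrt_le_sqrt; push_cast; linarith
  set n := Nat.sqrt m with hn
  have h1 : (n:ℝ) ≤ Real.sqrt m := Real.nat_sqrt_le_real_sqrt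
  have h2 : Real.sqrt m < n + 1 := Real.real_sqrt_lt_nat_sqrt_succ
  have h3 : (Nat.sqrt (m+1) : ℝ) ≤ Real.sqrt ((m+1 : ℕ)) := Real.nat_sqrt_le_real_sqrt
  have h4 : Real.sqrt ((m+1 : ℕ)) < Nat.sqrt (m+1) + 1 := Real.real_sqrt_lt_nat_sqrt_succ
  have hδ : (0:ℝ) ≤ Real.sqrt ((m+1:ℕ)) - Real.sqrt m := by linarith
  have hgoalcast : Real.sqrt ((m:ℝ)+1) = Real.sqrt ((m+1:ℕ)) := by push_cast; ring_nf
  rw [hgoalcast]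
  have hB : (0:ℝ) ≤ Real.pi * (Real.sqrt ((m+1:ℕ)) - Real.sqrt m) := by positivity
  have hcases : Nat.sqrt (m+1) = n ∨ Nat.sqrt (m+1) = n + 1 := by
    have ha : Nat.sqrt (m+1) ≤ Nat.sqrt m + 1 := Nat.sqrt_succ_le_succ_sqrt m
    have hb : Nat.sqrt m ≤ Nat.sqrt (m+1) := Nat.sqrt_le_sqrt (Nat.le_succ m)
    omega
  rcases hcases with hc | hc
  · have hang : ang (m+1) = Real.pi/2 * (Real.sqrt ((m+1:ℕ)) - n) := by
      rw [ang, hc]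
    have hang0 : ang m = Real.pi/2 * (Real.sqrt m - n) := by rw [ang]
    have hdiffang : ang (m+1) - ang m
        = Real.pi/2 * (Real.sqrt ((m+1:ℕ)) - Real.sqrt m) := by
      rw [hang, hang0]; ring
    have hdiff : xi e (m+1) - xi e m =
        ((Real.cos (ang (m+1)) - Real.cos (ang m) : ℝ) : ℂ) • e n
        + ((Real.sin (ang (m+1)) - Real.sin (ang m) : ℝ) : ℂ) • e (n+1) := by
      simp only [xi, hc]
      push_cast
      module
    rw [hdiff]
    apply le_of_sq_le_sq3 (norm_nonneg _) hB
    rw [norm_sq_two he (show n ≠ n+1 by omega)]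
    have hcb : |Real.cos (ang (m+1)) - Real.cos (ang m)| ≤
        Real.pi/2 * (Real.sqrt ((m+1:ℕ)) - Real.sqrt m) := by
      refine (cos_lip _ _).trans ?_
      rw [hdiffang, abs_of_nonneg (by positivity)]
    have hsb : |Real.sin (ang (m+1)) - Real.sin (ang m)| ≤
        Real.pi/2 * (Real.sqrt ((m+1:ℕ)) - Real.sqrt m) := by
      refine (sin_lip _ _).trans ?_
      rw [hdiffang, abs_of_nonneg (by positivity)]
    nlinarith [sq_abs (Real.cos (ang (m+1)) - Real.cos (ang m)),
      sq_abs (Real.sin (ang (m+1)) - Real.sin (ang m)),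
      abs_nonneg (Real.cos (ang (m+1)) - Real.cos (ang m)),
      abs_nonneg (Real.sin (ang (m+1)) - Real.sin (ang m))]
  · -- crossing a segment boundary
    set u : ℝ := Real.pi/2 - ang m with hu_def
    set v : ℝ := ang (m+1) with hv_def
    have hang : ang (m+1) = Real.pi/2 * (Real.sqrt ((m+1:ℕ)) - (n+1)) := by
      rw [ang, hc]; push_cast; ring
    have hang0 : ang m = Real.pi/2 * (Real.sqrt m - n) := by rw [ang]
    have hu : 0 ≤ u := by rw [hu_def, hang0]; nlinarith
    have hv : 0 ≤ v := by
      rw [hv_def, hang]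
      have : ((n:ℝ)+1) ≤ Real.sqrt ((m+1:ℕ)) := by
        rw [hc] at h3; push_cast at h3; linarith
      nlinarith
    have huv : u + v = Real.pi/2 * (Real.sqrt ((m+1:ℕ)) - Real.sqrt m) := by
      rw [hu_def, hv_def, hang, hang0]; ring
    have hdiff : xi e (m+1) - xi e m =
        ((-(Real.cos (ang m)) : ℝ) : ℂ) • e n
        + ((Real.cos (ang (m+1)) - Real.sin (ang m) : ℝ) : ℂ) • e (n+1)
        + ((Real.sin (ang (m+1)) : ℝ) : ℂ) • e (n+2) := by
      simp only [xi, hc]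
      push_cast
      module
    rw [hdiff]
    apply le_of_sq_le_sq3 (norm_nonneg _) hB
    rw [norm_sq_three he (show n ≠ n+1 by omega) (show n ≠ n+2 by omega)
      (show n+1 ≠ n+2 by omega)]
    have hangu : ang m = Real.pi/2 - u := by rw [hu_def]; ring
    have hca : |Real.cos (ang m)| ≤ u := by
      rw [hangu, Real.cos_pi_div_two_sub]
      exact Real.abs_sin_le_abs.trans_eq (abs_of_nonneg hu)
    have hcs : |Real.cos (ang (m+1)) - Real.sin (ang m)| ≤ u + v := by
      rw [hangu, Real.sin_pi_div_two_sub, ← hv_def]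
      refine (cos_lip _ _).trans ?_
      rw [abs_le]; constructor <;> nlinarith
    have hsv : |Real.sin (ang (m+1))| ≤ v := by
      rw [← hv_def]
      exact Real.abs_sin_le_abs.trans_eq (abs_of_nonneg hv)
    have h2uv : Real.pi * (Real.sqrt ((m+1:ℕ)) - Real.sqrt m) = 2*(u+v) := by
      rw [huv]; ring
    rw [h2uv]
    nlinarith [sq_abs (Real.cos (ang m)), sq_abs (Real.cos (ang (m+1)) - Real.sin (ang m)),
      sq_abs (Real.sin (ang (m+1))), abs_nonneg (Real.cos (ang m)),
      abs_nonneg (Real.cos (ang (m+1)) - Real.sin (ang m)), abs_nonneg (Real.sin (ang (m+1)))]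

set_option maxHeartbeats 1000000 in
theorem stmt19 [TopologicalSpace.SeparableSpace H] (hinf : ¬ FiniteDimensional ℂ H) :
    ∃ ξ : ℕ → H, (∀ n, ‖ξ n‖ = 1) ∧
      (∀ η : H, Tendsto (fun n => ⟪ξ n, η⟫) atTop (nhds 0)) ∧
      (∀ n, ‖ξ (n + 1)‖ ≤ ‖ξ n‖) ∧
      (∀ k : ℕ, Tendsto (fun n => ‖ξ (n + k) - ξ n‖) atTop (nhds 0)) ∧
      ¬ TotallyBounded (Set.range ξ) := by
  obtain ⟨w, b, hb⟩ := exists_hilbertBasis ℂ H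
  have hwinf : w.Infinite := by
    intro hfin
    haveI := hfin.fintype
    exact hinf (Module.Finite.of_basis b.toOrthonormalBasis.toBasis)
  haveI := hwinf.to_subtype
  set e : ℕ → H := fun n => b (Infinite.natEmbedding w n) with he_def
  have he : Orthonormal ℂ e := b.orthonormal.comp _ (Infinite.natEmbedding w).injective
  -- auxiliary: Nat.sqrt tends to infinity
  have hsqrtTop : Tendsto (fun m : ℕ => Nat.sqrt m) atTop atTop := by
    apply tendsto_atTop_atTop.mpr
    intro bb
    refine ⟨bb^2, fun m hm => ?_⟩
    have := Nat.sqrt_le_sqrt hm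
    rwa [Nat.sqrt_eq'] at this
  refine ⟨xi e, fun m => xi_norm he m, ?_, ?_, ?_, ?_⟩
  · -- weak convergence to 0
    intro η
    have hg : Tendsto (fun n => ‖⟪e n, η⟫‖) atTop (nhds 0) := by
      have hsum : Summable (fun n => ‖⟪e n, η⟫‖^2) := Orthonormal.inner_products_summable η he
      have h0 := hsum.tendsto_atTop_zero
      have h1 := h0.sqrt
      have h2 : ∀ n, Real.sqrt (‖⟪e n, η⟫‖^2) = ‖⟪e n, η⟫‖ :=
        fun n => Real.sqrt_sq (norm_nonneg _)
      simpa [h2] using h1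
    apply squeeze_zero_norm
      (a := fun m => ‖⟪e (Nat.sqrt m), η⟫‖ + ‖⟪e (Nat.sqrt m + 1), η⟫‖)
    · intro m
      have hx : ⟪xi e m, η⟫ = ((Real.cos (ang m) : ℝ):ℂ) * ⟪e (Nat.sqrt m), η⟫
          + ((Real.sin (ang m):ℝ):ℂ) * ⟪e (Nat.sqrt m+1), η⟫ := by
        rw [xi, inner_add_left, inner_smul_left, inner_smul_left,
          Complex.conj_ofReal, Complex.conj_ofReal]
      rw [hx]
      have hc1 : |Real.cos (ang m)| ≤ 1 := Real.abs_cos_le_one _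
      have hc2 : |Real.sin (ang m)| ≤ 1 := Real.abs_sin_le_one _
      calc ‖_ + _‖ ≤ ‖((Real.cos (ang m) : ℝ):ℂ) * ⟪e (Nat.sqrt m), η⟫‖
            + ‖((Real.sin (ang m):ℝ):ℂ) * ⟪e (Nat.sqrt m+1), η⟫‖ := norm_add_le _ _
        _ ≤ ‖⟪e (Nat.sqrt m), η⟫‖ + ‖⟪e (Nat.sqrt m + 1), η⟫‖ := by
            rw [norm_mul, norm_mul]
            have e1 : ‖((Real.cos (ang m) : ℝ):ℂ)‖ = |Real.cos (ang m)| := by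
              rw [Complex.norm_real, Real.norm_eq_abs]
            have e2 : ‖((Real.sin (ang m) : ℝ):ℂ)‖ = |Real.sin (ang m)| := by
              rw [Complex.norm_real, Real.norm_eq_abs]
            rw [e1, e2]
            have := norm_nonneg (⟪e (Nat.sqrt m), η⟫)
            have := norm_nonneg (⟪e (Nat.sqrt m + 1), η⟫)
            nlinarith [abs_nonneg (Real.cos (ang m)), abs_nonneg (Real.sin (ang m))]
    · have t1 := hg.comp hsqrtTop
      have t2 := hg.comp (tendsto_atTop_mono (fun m => Nat.le_succ _) hsqrtTop)
      simpa using t1.add t2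
  · -- norms nonincreasing (all equal to one)
    intro n
    rw [xi_norm he, xi_norm he]
  · -- small displacements
    intro k
    have key : ∀ k m : ℕ, ‖xi e (m+k) - xi e m‖
        ≤ Real.pi * (Real.sqrt ((m+k : ℕ)) - Real.sqrt m) := by
      intro k
      induction k with
      | zero => intro m; simp
      | succ k ih =>
        intro m
        have t1 := xi_step he (m+k)
        have t2 := ih m
        have tri : ‖xi e (m+(k+1)) - xi e m‖
            ≤ ‖xi e (m+k+1) - xi e (m+k)‖ + ‖xi e (m+k) - xi e m‖ := by
          have hEq : xi e (m+(k+1)) - xi e m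
              = (xi e (m+k+1) - xi e (m+k)) + (xi e (m+k) - xi e m) := by
            rw [show m+(k+1) = m+k+1 from rfl]; abel
          rw [hEq]; exact norm_add_le _ _
        have hc1 : Real.sqrt (((m+k : ℕ):ℝ)+1) = Real.sqrt ((m+(k+1) : ℕ)) := by
          norm_cast
        rw [hc1] at t1
        calc ‖xi e (m+(k+1)) - xi e m‖
            ≤ ‖xi e (m+k+1) - xi e (m+k)‖ + ‖xi e (m+k) - xi e m‖ := tri
          _ ≤ Real.pi * (Real.sqrt ((m+(k+1) : ℕ)) - Real.sqrt ((m+k:ℕ)))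
              + Real.pi * (Real.sqrt ((m+k : ℕ)) - Real.sqrt m) := add_le_add t1 t2
          _ = Real.pi * (Real.sqrt ((m+(k+1) : ℕ)) - Real.sqrt m) := by ring
    -- the bound tends to zero
    have hsqrtR : Tendsto (fun m : ℕ => Real.sqrt m) atTop atTop := by
      apply tendsto_atTop_atTop.mpr
      intro bb
      refine ⟨(⌈bb⌉₊)^2, fun m hm => ?_⟩
      have h1 : bb ≤ (⌈bb⌉₊ : ℝ) := Nat.le_ceil bb
      have h2 : ((⌈bb⌉₊:ℝ)) ≤ Real.sqrt m := by
        rw [show ((⌈bb⌉₊:ℝ)) = Real.sqrt (((⌈bb⌉₊:ℝ))^2) from (Real.sqrt_sq (by positivity)).symm]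
        apply Real.sqrt_le_sqrt
        exact_mod_cast (by exact_mod_cast hm : ((⌈bb⌉₊^2 : ℕ):ℝ) ≤ (m:ℝ))
      linarith
    have hinv : Tendsto (fun m : ℕ => (k:ℝ) / Real.sqrt m) atTop (nhds 0) := by
      have h := hsqrtR.inv_tendsto_atTop
      have := h.const_mul (k:ℝ)
      simpa [div_eq_mul_inv] using this
    have hbnd : Tendsto (fun m : ℕ => Real.sqrt ((m+k:ℕ)) - Real.sqrt m) atTop (nhds 0) := by
      apply squeeze_zero' (g := fun m : ℕ => (k:ℝ) / Real.sqrt m)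
      · filter_upwards with m
        have : Real.sqrt (m:ℝ) ≤ Real.sqrt ((m+k:ℕ)) := by
          apply Real.sqrt_le_sqrt; push_cast; linarith
        linarith
      · filter_upwards [eventually_ge_atTop 1] with m hm
        have ha : Real.sqrt ((m+k:ℕ))^2 = ((m+k:ℕ):ℝ) := Real.sq_sqrt (by positivity)
        have hbq : Real.sqrt (m:ℝ)^2 = (m:ℝ) := Real.sq_sqrt (by positivity)
        have hm1 : (1:ℝ) ≤ Real.sqrt m := by
          rw [show (1:ℝ) = Real.sqrt 1 from Real.sqrt_one.symm]
          apply Real.sqrt_le_sqrt; exact_mod_cast hm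
        rw [le_div_iff₀ (by linarith : (0:ℝ) < Real.sqrt m)]
        have hcast : ((m+k:ℕ):ℝ) = (m:ℝ) + k := by push_cast; ring
        nlinarith [Real.sqrt_nonneg ((m+k:ℕ):ℝ), Real.sqrt_nonneg (m:ℝ)]
      · exact hinv
    apply squeeze_zero (fun m => norm_nonneg _) (fun m => key k m)
    simpa using hbnd.const_mul Real.pi
  · -- not totally bounded
    intro hTB
    have hsub : Set.range e ⊆ Set.range (xi e) := by
      rintro _ ⟨n, rfl⟩
      exact ⟨n^2, xi_sq e n⟩
    have hTB' : TotallyBounded (Set.range e) := hTB.subset hsub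
    rw [Metric.totallyBounded_iff] at hTB'
    obtain ⟨t, htf, hcov⟩ := hTB' (1/2) (by norm_num)
    have hch : ∀ n : ℕ, ∃ y, y ∈ t ∧ e n ∈ Metric.ball y (1/2) := by
      intro n
      have := hcov (Set.mem_range_self n)
      simpa using this
    choose f hf1 hf2 using hch
    obtain ⟨i, -, j, -, hij, hfij⟩ :=
      Set.infinite_univ.exists_ne_map_eq_of_mapsTo (f := f) (fun n _ => hf1 n) htf
    have d1 := hf2 i
    have d2 := hf2 j
    rw [Metric.mem_ball] at d1 d2
    have hdist : dist (e i) (e j) < 1 := by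
      have htr := dist_triangle (e i) (f i) (e j)
      have : dist (f i) (e j) = dist (e j) (f j) := by rw [hfij, dist_comm]
      linarith
    have h2 : ‖e i - e j‖^2 = 2 := by
      have hns := norm_sq_two he hij 1 (-1)
      norm_num at hns
      rw [sub_eq_add_neg]
      linarith
    rw [dist_eq_norm] at hdist
    nlinarith [norm_nonneg (e i - e j)]
end
end
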